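/- arXiv:2007.12009 — 7 statements merged into one kernel-verified Lean document; each statement's English description precedes it below -/
import Mathlib

section
/- Let r ≥ 3 and let δ ∈ (0, 1) satisfy (2 - δ)^r = 2/δ - 2 + δ. Then rδ < 1. -/
theorem stmt4 (r : ℕ) (hr : 3 ≤ r) (δ : ℝ) (hδ : δ ∈ Set.Ioo (0 : ℝ) 1)
    (heq : (2 - δ) ^ r = 2 / δ - 2 + δ) : (r : ℝ) * δ < 1 := by
  obtain ⟨hδ0, hδ1⟩ := hδ
  by_contra hcon
  push_neg at hcon
  set x : ℝ := 1 - δ with hxdef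
  have hx0 : 0 < x := by simp [hxdef]; linarith
  have hx1 : x < 1 := by simp [hxdef]; linarith
  -- rewrite the equation
  have key : δ * (2 - δ) ^ r = 2 - 2 * δ + δ ^ 2 := by
    have := heq
    field_simp at this
    nlinarith [this]
  obtain ⟨s, rfl⟩ : ∃ s : ℕ, r = s + 3 := ⟨r - 3, by omega⟩
  have hs : (0:ℝ) ≤ (s:ℝ) := Nat.cast_nonneg s
  have hb : 1 + (s:ℝ) * x ≤ (1 + x) ^ s := by
    have := one_add_mul_le_pow (a := x) (by linarith) s
    linarith
  have h2δ : 2 - δ = 1 + x := by simp [hxdef]; ring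
  have hcon' : 1 ≤ ((s:ℝ) + 3) * (1 - x) := by
    push_cast at hcon
    simp [hxdef]
    linarith
  have hpow : δ * (2 - δ) ^ (s + 3) ≥ (1 - x) * (1 + x) ^ 3 * (1 + (s:ℝ) * x) := by
    rw [h2δ, pow_add]
    have h1 : (0:ℝ) < (1 + x) ^ 3 := by positivity
    have h2 : (1:ℝ) - x = δ := by simp [hxdef]
    rw [h2]
    calc δ * ((1 + x) ^ s * (1 + x) ^ 3) ≥ δ * ((1 + (s:ℝ) * x) * (1 + x) ^ 3) := by
          apply mul_le_mul_of_nonneg_left _ (le_of_lt hδ0)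
          exact mul_le_mul_of_nonneg_right hb (le_of_lt h1)
      _ = δ * (1 + x) ^ 3 * (1 + (s:ℝ) * x) := by ring
  have hsc : (3:ℝ) * x - 2 ≤ (s:ℝ) * (1 - x) := by nlinarith [hcon']
  have hstrict : (1 - x) * (1 + x) ^ 3 * (1 + (s:ℝ) * x) > 1 + x ^ 2 := by
    rcases le_or_gt x (2/3) with hle | hgt
    · have h4 : 0 ≤ (s:ℝ) * x * (1 - x) * (1 + x) ^ 3 := by
        have : (0:ℝ) < (1 + x) ^ 3 := by positivity
        have h1x : (0:ℝ) ≤ 1 - x := by linarith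
        exact mul_nonneg (mul_nonneg (mul_nonneg hs hx0.le) h1x) this.le
      have h6 : 0 < 2 - x - 2 * x ^ 2 - x ^ 3 := by
        nlinarith [hle, hx0, mul_pos hx0 hx0, mul_pos (mul_pos hx0 hx0) hx0]
      have h6' : 0 < x * (2 - x - 2 * x ^ 2 - x ^ 3) := mul_pos hx0 h6
      nlinarith [h4, h6']
    · have h5 : x * ((3:ℝ) * x - 2) * (1 + x) ^ 3 ≤ x * ((s:ℝ) * (1 - x)) * (1 + x) ^ 3 := by
        have h1 : (0:ℝ) < (1 + x) ^ 3 := by positivity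
        have := mul_le_mul_of_nonneg_left hsc hx0.le
        exact mul_le_mul_of_nonneg_right this h1.le
      have h8 : 0 < -4 + x + 6 * x ^ 2 + 3 * x ^ 3 := by
        nlinarith [hgt, hx1, mul_pos hx0 hx0, sq_nonneg (x - 2/3)]
      have h7 : 0 < x ^ 2 * (-4 + x + 6 * x ^ 2 + 3 * x ^ 3) := by
        have : (0:ℝ) < x ^ 2 := by positivity
        exact mul_pos this h8
      nlinarith [h5, h7]
  have heq2 : δ * (2 - δ) ^ (s + 3) = 1 + x ^ 2 := by
    rw [key]; simp [hxdef]; ring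
  linarith [hpow, hstrict, heq2.symm.le]
end

section
/- Let f_a(x) = 1 - a|x| with a ∈ [√2, 2] and c_n(a) = f_a^n(0). Suppose J ⊂ [√2, 2] is an interval such that c_k(a) ≠ 0 for all a in the interior of J and all 1 ≤ k < n (for some n ≥ 2). Then for all a ∈ J, the sign of the derivative of a ↦ c_n(a) equals the sign of (f_a^{n-1})'(c_1(a)), where (f_a^{n-1})'(c_1) = ∏_{k=1}^{n-1} (-a·sgn(c_k(a))). -/
noncomputable def tent (a x : ℝ) : ℝ := 1 - a * |x|

namespace TentAux

open Filter Set

/-- critical orbit -/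
noncomputable def cc (k : ℕ) (a : ℝ) : ℝ := (tent a)^[k] 0

noncomputable def esign (τ c d : ℝ) : ℝ :=
  if c = 0 then (if 0 < d then τ else -τ) else (if 0 < c then 1 else -1)

/-- one-sided derivative sequence; τ = 1 for right side, τ = -1 for left side -/
noncomputable def Dd (a τ : ℝ) : ℕ → ℝ
  | 0 => 0
  | k+1 => -(esign τ (cc k a) (Dd a τ k)) * cc k a - a * (esign τ (cc k a) (Dd a τ k) * Dd a τ k)

/-- one-sided sign sequence -/
noncomputable def Ee (a τ : ℝ) (k : ℕ) : ℝ := esign τ (cc k a) (Dd a τ k)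

lemma Dd_succ (a τ : ℝ) (k : ℕ) :
    Dd a τ (k+1) = -(Ee a τ k) * cc k a - a * (Ee a τ k * Dd a τ k) := rfl

noncomputable def Sig (a τ : ℝ) (m : ℕ) : ℝ := ∏ j ∈ Finset.Ico 1 m, (-(Ee a τ j))

lemma cc_zero (a : ℝ) : cc 0 a = 0 := rfl

lemma cc_succ (k : ℕ) (a : ℝ) : cc (k+1) a = 1 - a * |cc k a| := by
  show (tent a)^[k+1] 0 = _
  rw [Function.iterate_succ_apply']
  rfl

lemma cc_one (a : ℝ) : cc 1 a = 1 := by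
  rw [cc_succ, cc_zero]; simp

lemma Dd_one (a τ : ℝ) : Dd a τ 1 = 0 := by
  rw [Dd_succ, cc_zero]
  show -(Ee a τ 0) * 0 - a * (Ee a τ 0 * 0) = 0
  ring

lemma Ee_one (a τ : ℝ) : Ee a τ 1 = 1 := by
  unfold Ee esign
  rw [cc_one]
  norm_num

lemma Dd_two (a τ : ℝ) : Dd a τ 2 = -1 := by
  rw [Dd_succ, Ee_one, cc_one, Dd_one]; ring

lemma Ee_pm (a τ : ℝ) (hτ : τ = 1 ∨ τ = -1) (k : ℕ) : Ee a τ k = 1 ∨ Ee a τ k = -1 := by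
  unfold Ee esign
  rcases hτ with h | h <;> subst h <;> split_ifs <;> simp

lemma Sig_pm (a τ : ℝ) (hτ : τ = 1 ∨ τ = -1) (m : ℕ) : Sig a τ m = 1 ∨ Sig a τ m = -1 := by
  unfold Sig
  refine Finset.prod_induction _ (fun x => x = 1 ∨ x = -1) ?_ (Or.inl rfl) ?_
  · rintro x y (rfl | rfl) (rfl | rfl) <;> norm_num
  · intro j _
    rcases Ee_pm a τ hτ j with h | h <;> rw [h] <;> norm_num

lemma Sig_one (a τ : ℝ) : Sig a τ 1 = 1 := by simp [Sig]

lemma Sig_succ (a τ : ℝ) (m : ℕ) (hm : 1 ≤ m) :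
    Sig a τ (m+1) = Sig a τ m * (-(Ee a τ m)) := by
  unfold Sig
  exact Finset.prod_Ico_succ_top hm _

lemma abs_cc_le_one (k : ℕ) (a : ℝ) (ha : 0 ≤ a) (ha2 : a ≤ 2) : |cc k a| ≤ 1 := by
  induction k with
  | zero => rw [cc_zero]; norm_num
  | succ k ih =>
    rw [cc_succ, abs_le]
    constructor <;> nlinarith [abs_nonneg (cc k a), ih]

lemma sqrt2_facts : (1:ℝ) < Real.sqrt 2 ∧ Real.sqrt 2 ^ 2 = 2 := by
  constructor
  · nlinarith [Real.sq_sqrt (by norm_num : (0:ℝ) ≤ 2), Real.sqrt_nonneg 2]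
  · exact Real.sq_sqrt (by norm_num)

/-- The key one-step inequality for the invariant. -/
lemma Fineq (a u : ℝ) (ha : Real.sqrt 2 ≤ a) (ha2 : a ≤ 2) (hu : 0 ≤ u) (hu1 : u ≤ 1) :
    |1 - a*u| + max 1 (2/a - |1 - a*u|) ≤ a * max 1 (2/a - u) := by
  obtain ⟨h1, h2⟩ := sqrt2_facts
  have hapos : (0:ℝ) < a := by linarith
  have ha2ge : 2 ≤ a ^ 2 := by nlinarith
  set g := |1 - a*u| with hg
  have e1 : g + max 1 (2/a - g) = max (g+1) (2/a) := by
    rw [← max_add_add_left g 1 (2/a - g)]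
    congr 1
    ring
  have e2 : a * max 1 (2/a - u) = max a (2 - a*u) := by
    rw [mul_max_of_nonneg _ _ (le_of_lt hapos)]
    congr 1
    · ring
    · field_simp
  rw [e1, e2]
  apply max_le
  · rcases abs_cases (1 - a*u) with ⟨he, _⟩ | ⟨he, _⟩
    · have : g + 1 = 2 - a*u := by rw [hg, he]; ring
      rw [this]; exact le_max_right _ _
    · have : g + 1 = a * u := by rw [hg, he]; ring
      rw [this]
      exact le_trans (by nlinarith) (le_max_left _ _)
  · have : 2/a ≤ a := by
      rw [div_le_iff₀ hapos]; nlinarith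
    exact le_trans this (le_max_left _ _)

/-- The invariant: the signed derivative dominates. -/
lemma inv (a τ : ℝ) (ha : Real.sqrt 2 ≤ a) (ha2 : a ≤ 2) (hτ : τ = 1 ∨ τ = -1) :
    ∀ m, 1 ≤ m → max 1 (2/a - |cc m a|) ≤ Sig a τ (m+1) * Dd a τ (m+1) := by
  obtain ⟨h1, _⟩ := sqrt2_facts
  have hapos : (0:ℝ) < a := by linarith
  intro m hm
  induction m with
  | zero => omega
  | succ m ih =>
    rcases Nat.eq_or_lt_of_le hm with h | h
    · -- m + 1 = 1, i.e. m = 0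
      have hm0 : m = 0 := by omega
      subst hm0
      rw [Sig_succ a τ 1 le_rfl, Sig_one, Dd_two, Ee_one, cc_one]
      have h2a : 2/a ≤ 2 := by rw [div_le_iff₀ hapos]; nlinarith
      have : max 1 (2/a - 1) ≤ 1 := max_le le_rfl (by linarith)
      calc max 1 (2/a - |(1:ℝ)|) ≤ 1 := by rwa [abs_one]
        _ ≤ 1 * -(1:ℝ) * -1 := by norm_num
    · have hm1 : 1 ≤ m := by omega
      have ih' := ih hm1
      -- abbreviations
      set u := |cc m a| with hu
      have hu0 : 0 ≤ u := abs_nonneg _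
      have hu1 : u ≤ 1 := abs_cc_le_one m a (le_of_lt hapos) ha2
      have hgu : |cc (m+1) a| = |1 - a * u| := by rw [cc_succ]
      have hE2 : Ee a τ (m+1) * Ee a τ (m+1) = 1 := by
        rcases Ee_pm a τ hτ (m+1) with h | h <;> rw [h] <;> norm_num
      have hSpm := Sig_pm a τ hτ (m+1)
      have key : Sig a τ (m+2) * Dd a τ (m+2)
          = Sig a τ (m+1) * cc (m+1) a + a * (Sig a τ (m+1) * Dd a τ (m+1)) := by
        rw [Sig_succ a τ (m+1) (by omega), Dd_succ]
        linear_combination (Sig a τ (m+1) * cc (m+1) a + a * Sig a τ (m+1) * Dd a τ (m+1)) * hE2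
      rw [key]
      have hb1 : -(|cc (m+1) a|) ≤ Sig a τ (m+1) * cc (m+1) a := by
        rcases hSpm with h | h <;> rw [h] <;> rcases abs_cases (cc (m+1) a) with ⟨e, _⟩ | ⟨e, _⟩ <;> linarith [le_abs_self (cc (m+1) a), neg_abs_le (cc (m+1) a)]
      have := Fineq a u ha ha2 hu0 hu1
      rw [hgu]
      calc max 1 (2/a - |1 - a*u|) ≤ a * max 1 (2/a - u) - |1 - a*u| := by linarith
        _ ≤ Sig a τ (m+1) * cc (m+1) a + a * (Sig a τ (m+1) * Dd a τ (m+1)) := by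
            have : a * max 1 (2/a - u) ≤ a * (Sig a τ (m+1) * Dd a τ (m+1)) := by
              apply mul_le_mul_of_nonneg_left ih' (le_of_lt hapos)
            rw [hgu] at hb1
            linarith



lemma abs_cc_eq (a τ : ℝ) (k : ℕ) : |cc k a| = Ee a τ k * cc k a := by
  unfold Ee esign
  by_cases h : cc k a = 0
  · rw [if_pos h, h]; simp
  · rw [if_neg h]
    rcases lt_trichotomy (cc k a) 0 with hn | hz | hp
    · rw [if_neg (by linarith), abs_of_neg hn]; ring
    · exact absurd hz h
    · rw [if_pos hp, abs_of_pos hp]; ring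

lemma Dd_ne_zero (a τ : ℝ) (ha : Real.sqrt 2 ≤ a) (ha2 : a ≤ 2) (hτ : τ = 1 ∨ τ = -1)
    (m : ℕ) (hm : 2 ≤ m) : Dd a τ m ≠ 0 := by
  obtain ⟨m', rfl⟩ : ∃ m', m = m' + 1 := ⟨m - 1, by omega⟩
  have h := inv a τ ha ha2 hτ m' (by omega)
  have h1 : (1:ℝ) ≤ Sig a τ (m'+1) * Dd a τ (m'+1) := le_trans (le_max_left _ _) h
  intro h0
  rw [h0, mul_zero] at h1
  linarith

lemma main (a τ : ℝ) (S : Set ℝ) (ha : Real.sqrt 2 ≤ a) (ha2 : a ≤ 2)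
    (hτS : (τ = 1 ∧ S = Set.Ici a) ∨ (τ = -1 ∧ S = Set.Iic a)) :
    ∀ k, HasDerivWithinAt (fun b => cc k b) (Dd a τ k) S a ∧
      (∀ᶠ b in nhdsWithin a S, 0 ≤ Ee a τ k * cc k b) := by
  have hτ : τ = 1 ∨ τ = -1 := by rcases hτS with ⟨h, _⟩ | ⟨h, _⟩ <;> [left; right] <;> exact h
  have habsS : ∀ b ∈ S, τ * (b - a) = |b - a| := by
    rcases hτS with ⟨h1, h2⟩ | ⟨h1, h2⟩ <;> subst h1 <;> subst h2 <;> intro b hb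
    · rw [abs_of_nonneg (by simp at hb; linarith)]; ring
    · rw [abs_of_nonpos (by simp at hb; linarith)]; ring
  intro k
  induction k with
  | zero =>
    constructor
    · have : (fun b => cc 0 b) = fun _ => (0:ℝ) := by funext b; rfl
      rw [this]
      exact hasDerivWithinAt_const a S 0
    · exact Filter.Eventually.of_forall (fun b => by rw [cc_zero]; simp)
  | succ k ih =>
    obtain ⟨hder, hsgn⟩ := ih
    set e := Ee a τ k with he
    have hepm : e = 1 ∨ e = -1 := Ee_pm a τ hτ k
    have heabs : |e| = 1 := by rcases hepm with h | h <;> rw [h] <;> norm_num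
    have heq : ∀ᶠ b in nhdsWithin a S, cc (k+1) b = 1 - b * (e * cc k b) := by
      refine hsgn.mono fun b hb => ?_
      rw [cc_succ]
      congr 1
      have : |cc k b| = |e * cc k b| := by rw [abs_mul, heabs, one_mul]
      rw [this, abs_of_nonneg hb]
    have h1 : HasDerivWithinAt (fun b => b * cc k b) (1 * cc k a + a * Dd a τ k) S a := by
      have := (hasDerivWithinAt_id a S).mul hder
      simpa [Pi.mul_def] using this
    have hG : HasDerivWithinAt (fun b => 1 - b * (e * cc k b)) (Dd a τ (k+1)) S a := by
      have h2 : HasDerivWithinAt (fun b => 1 - e * (b * cc k b))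
          (-(e * (1 * cc k a + a * Dd a τ k))) S a := (h1.const_mul e).const_sub 1
      have hfun : (fun b => 1 - b * (e * cc k b)) = (fun b => 1 - e * (b * cc k b)) := by
        funext b; ring
      rw [hfun, Dd_succ]
      convert h2 using 1
      rw [← he]; ring
    have hnew : HasDerivWithinAt (fun b => cc (k+1) b) (Dd a τ (k+1)) S a := by
      refine hG.congr_of_eventuallyEq heq ?_
      rw [cc_succ, abs_cc_eq a τ k, ← he]
    refine ⟨hnew, ?_⟩
    by_cases hc : cc (k+1) a = 0
    · -- kink case : use transversality
      have hk1 : 1 ≤ k := by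
        by_contra h
        have : k = 0 := by omega
        rw [this, cc_one] at hc
        norm_num at hc
      have hdne : Dd a τ (k+1) ≠ 0 := Dd_ne_zero a τ ha ha2 hτ (k+1) (by omega)
      set d := Dd a τ (k+1) with hd
      have hE : Ee a τ (k+1) = if 0 < d then τ else -τ := by
        unfold Ee esign
        rw [if_pos hc]
      have hed : Ee a τ (k+1) * d = τ * |d| := by
        rw [hE]
        split_ifs with hdp
        · rw [abs_of_pos hdp]
        · have : d < 0 := lt_of_le_of_ne (not_lt.mp hdp) hdne
          rw [abs_of_neg this]; ring
      have hEabs : |Ee a τ (k+1)| = 1 := by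
        rcases Ee_pm a τ hτ (k+1) with h | h <;> rw [h] <;> norm_num
      have hlo := hasDerivWithinAt_iff_isLittleO.mp hnew
      have hev := hlo.def (show (0:ℝ) < |d|/2 by positivity)
      filter_upwards [hev, self_mem_nhdsWithin] with b hb hbS
      simp only [Real.norm_eq_abs, smul_eq_mul, hc, sub_zero] at hb
      have hτb : τ * (b - a) = |b - a| := habsS b hbS
      set E := Ee a τ (k+1)
      have hsplit : E * cc (k+1) b
          = E * ((b-a)*d) + E * (cc (k+1) b - (b-a)*d) := by ring
      have hh1 : E * ((b-a)*d) = |d| * |b-a| := by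
        rw [show E*((b-a)*d) = (E*d)*(b-a) by ring, hed, show τ * |d| * (b-a) = |d| * (τ * (b-a)) by ring, hτb]
      have habs2 : |E * (cc (k+1) b - (b-a)*d)| = |cc (k+1) b - (b-a)*d| := by
        rw [abs_mul, hEabs, one_mul]
      have hh2 : -(|d|/2 * |b-a|) ≤ E * (cc (k+1) b - (b-a)*d) := by
        have := neg_abs_le (E * (cc (k+1) b - (b-a)*d))
        rw [habs2] at this
        linarith
      have hh3 : |d|/2 * |b-a| ≤ |d| * |b-a| := by
        nlinarith [abs_nonneg d, abs_nonneg (b-a)]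
      linarith
    · -- no kink : sign locally constant by continuity
      have hE : Ee a τ (k+1) = if 0 < cc (k+1) a then 1 else -1 := by
        unfold Ee esign
        rw [if_neg hc]
      have hpos : 0 < Ee a τ (k+1) * cc (k+1) a := by
        rw [hE]
        split_ifs with h
        · simpa using h
        · have : cc (k+1) a < 0 := lt_of_le_of_ne (not_lt.mp h) hc
          nlinarith
      have hcont : ContinuousWithinAt (fun b => cc (k+1) b) S a := hnew.continuousWithinAt
      have hcont' : Filter.Tendsto (fun b => cc (k+1) b) (nhdsWithin a S)
          (nhds (cc (k+1) a)) := hcont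
      have htend : Filter.Tendsto (fun b => Ee a τ (k+1) * cc (k+1) b) (nhdsWithin a S)
          (nhds (Ee a τ (k+1) * cc (k+1) a)) := hcont'.const_mul _
      exact (Filter.Tendsto.eventually_const_lt hpos htend).mono fun b hb => le_of_lt hb



lemma EeAgree (a : ℝ) (m : ℕ) (hm : cc m a ≠ 0) : Ee a 1 m = Ee a (-1) m := by
  unfold Ee esign
  rw [if_neg hm, if_neg hm]

lemma DdAgree (a : ℝ) (m : ℕ) (hc : ∀ j, 1 ≤ j → j < m → cc j a ≠ 0) :
    Dd a 1 m = Dd a (-1) m := by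
  induction m with
  | zero => rfl
  | succ m ih =>
    rcases Nat.eq_zero_or_pos m with rfl | hm
    · rw [Dd_one, Dd_one]
    · have hcm : cc m a ≠ 0 := hc m hm (by omega)
      have ihh : Dd a 1 m = Dd a (-1) m := ih (fun j h1 h2 => hc j h1 (by omega))
      rw [Dd_succ, Dd_succ, ihh, EeAgree a m hcm]

lemma sign_eq_Ee (a : ℝ) (k : ℕ) (h : cc k a ≠ 0) : Real.sign (cc k a) = Ee a 1 k := by
  unfold Ee esign
  rw [if_neg h]
  rcases lt_trichotomy (cc k a) 0 with hn | hz | hp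
  · rw [Real.sign_of_neg hn, if_neg (by linarith)]
  · exact absurd hz h
  · rw [Real.sign_of_pos hp, if_pos hp]

lemma Dd_ne (a : ℝ) (ha : Real.sqrt 2 ≤ a) (ha2 : a ≤ 2) (k₀ : ℕ) (hk₀ : 2 ≤ k₀)
    (hc0 : cc k₀ a = 0) (hagr : Dd a 1 k₀ = Dd a (-1) k₀) :
    ∀ t, Dd a 1 (k₀+1+t) ≠ Dd a (-1) (k₀+1+t) := by
  have h1s := sqrt2_facts.1
  have ha0 : (0:ℝ) < a := by linarith
  intro t
  induction t with
  | zero =>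
    have hDne : Dd a 1 k₀ ≠ 0 := Dd_ne_zero a 1 ha ha2 (Or.inl rfl) k₀ hk₀
    have h1 : Dd a 1 (k₀+1) = -a * ((if 0 < Dd a 1 k₀ then (1:ℝ) else -1) * Dd a 1 k₀) := by
      rw [Dd_succ]
      unfold Ee esign
      rw [if_pos hc0, hc0]
      ring
    have h2 : Dd a (-1) (k₀+1)
        = -a * ((if 0 < Dd a 1 k₀ then (-1:ℝ) else -(-1)) * Dd a 1 k₀) := by
      rw [Dd_succ]
      unfold Ee esign
      rw [if_pos hc0, hc0, ← hagr]
      ring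
    show Dd a 1 (k₀+1) ≠ Dd a (-1) (k₀+1)
    rcases lt_or_gt_of_ne hDne with hD | hD
    · rw [h1, h2, if_neg (by linarith), if_neg (by linarith)]
      intro hcon
      nlinarith
    · rw [h1, h2, if_pos hD, if_pos hD]
      intro hcon
      nlinarith
  | succ t ih =>
    set j := k₀ + 1 + t with hj
    show Dd a 1 (j+1) ≠ Dd a (-1) (j+1)
    by_cases hcj : cc j a = 0
    · have hD1 : Dd a 1 j ≠ 0 := Dd_ne_zero a 1 ha ha2 (Or.inl rfl) j (by omega)
      have hD2 : Dd a (-1) j ≠ 0 := Dd_ne_zero a (-1) ha ha2 (Or.inr rfl) j (by omega)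
      have h1 : Dd a 1 (j+1) = -a * ((if 0 < Dd a 1 j then (1:ℝ) else -1) * Dd a 1 j) := by
        rw [Dd_succ]
        unfold Ee esign
        rw [if_pos hcj, hcj]
        ring
      have h2 : Dd a (-1) (j+1)
          = -a * ((if 0 < Dd a (-1) j then (-1:ℝ) else -(-1)) * Dd a (-1) j) := by
        rw [Dd_succ]
        unfold Ee esign
        rw [if_pos hcj, hcj]
        ring
      have hn1 : Dd a 1 (j+1) < 0 := by
        rw [h1]
        rcases lt_or_gt_of_ne hD1 with h | h
        · rw [if_neg (by linarith)]; nlinarith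
        · rw [if_pos h]; nlinarith
      have hn2 : 0 < Dd a (-1) (j+1) := by
        rw [h2]
        rcases lt_or_gt_of_ne hD2 with h | h
        · rw [if_neg (by linarith)]; nlinarith
        · rw [if_pos h]; nlinarith
      intro hcon
      rw [hcon] at hn1
      linarith
    · have hEE : Ee a 1 j = Ee a (-1) j := EeAgree a j hcj
      have hEpm : Ee a 1 j = 1 ∨ Ee a 1 j = -1 := Ee_pm a 1 (Or.inl rfl) j
      have hEne : Ee a 1 j ≠ 0 := by rcases hEpm with h | h <;> rw [h] <;> norm_num
      intro hcon
      rw [Dd_succ, Dd_succ, ← hEE] at hcon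
      have haa : a ≠ 0 := by linarith
      have h2 : Ee a 1 j * Dd a 1 j = Ee a 1 j * Dd a (-1) j :=
        mul_left_cancel₀ haa (by linarith)
      exact ih (mul_left_cancel₀ hEne h2)

end TentAux

open TentAux in
theorem stmt7 (n : ℕ) (hn : 2 ≤ n) (J : Set ℝ) (hJ : J ⊆ Set.Icc (Real.sqrt 2) 2)
    (hJconn : J.OrdConnected)
    (hk : ∀ a ∈ interior J, ∀ k, 1 ≤ k → k < n → (tent a)^[k] 0 ≠ 0) :
    ∀ a ∈ J, Real.sign (deriv (fun b => (tent b)^[n] 0) a)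
      = Real.sign (∏ k ∈ Finset.Ico 1 n, (-a * Real.sign ((tent a)^[k] 0))) := by
  intro a haJ
  obtain ⟨ha, ha2⟩ := Set.mem_Icc.mp (hJ haJ)
  have h1s := sqrt2_facts.1
  have ha0 : (0:ℝ) < a := by linarith
  have hplus := ((main a 1 (Set.Ici a) ha ha2 (Or.inl ⟨rfl, rfl⟩)) n).1
  have hminus := ((main a (-1) (Set.Iic a) ha ha2 (Or.inr ⟨rfl, rfl⟩)) n).1
  by_cases hA : ∀ k, 1 ≤ k → k < n → cc k a ≠ 0
  · -- generic case: differentiable with derivative Dd a 1 n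
    have hag : Dd a 1 n = Dd a (-1) n := DdAgree a n hA
    rw [← hag] at hminus
    have hda : HasDerivAt (fun b => cc n b) (Dd a 1 n) a := by
      have := hminus.union hplus
      rw [Set.Iic_union_Ici] at this
      exact hasDerivWithinAt_univ.mp this
    have hderiv : deriv (fun b => (tent b)^[n] 0) a = Dd a 1 n := hda.deriv
    rw [hderiv]
    obtain ⟨m, rfl⟩ : ∃ m, n = m + 1 := ⟨n - 1, by omega⟩
    have hx : (1:ℝ) ≤ Sig a 1 (m+1) * Dd a 1 (m+1) :=
      le_trans (le_max_left _ _) (inv a 1 ha ha2 (Or.inl rfl) m (by omega))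
    have hSpm := Sig_pm a 1 (Or.inl rfl) (m+1)
    have hsign : Real.sign (Dd a 1 (m+1)) = Sig a 1 (m+1) := by
      rcases hSpm with h | h
      · rw [h] at hx; rw [h]; exact Real.sign_of_pos (by linarith)
      · rw [h] at hx; rw [h]; exact Real.sign_of_neg (by linarith)
    rw [hsign]
    have hprod : ∏ k ∈ Finset.Ico 1 (m+1), (-a * Real.sign ((tent a)^[k] 0))
        = a^m * Sig a 1 (m+1) := by
      have hcongr : ∀ k ∈ Finset.Ico 1 (m+1),
          -a * Real.sign ((tent a)^[k] 0) = a * (-(Ee a 1 k)) := by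
        intro k hk
        rw [Finset.mem_Ico] at hk
        have hs : Real.sign (cc k a) = Ee a 1 k := sign_eq_Ee a k (hA k hk.1 hk.2)
        rw [show (tent a)^[k] 0 = cc k a from rfl, hs]
        ring
      rw [Finset.prod_congr rfl hcongr, Finset.prod_mul_distrib, Finset.prod_const,
        Nat.card_Ico]
      rfl
    rw [hprod]
    have hap : (0:ℝ) < a^m := pow_pos ha0 m
    rcases hSpm with h | h <;> rw [h]
    · rw [mul_one, Real.sign_of_pos hap]
    · rw [show a^m * (-1:ℝ) = -(a^m) by ring, Real.sign_of_neg (by linarith)]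
  · -- kink case: not differentiable, both sides zero
    push_neg at hA
    obtain ⟨k, hk1, hkn, hc0⟩ := hA
    have hmem : k ∈ Finset.Ico 1 n := Finset.mem_Ico.mpr ⟨hk1, hkn⟩
    have hfac : -a * Real.sign ((tent a)^[k] 0) = 0 := by
      rw [show (tent a)^[k] 0 = cc k a from rfl, hc0, Real.sign_zero, mul_zero]
    rw [Finset.prod_eq_zero hmem hfac, Real.sign_zero]
    have hP : ∃ j, 1 ≤ j ∧ j < n ∧ cc j a = 0 := ⟨k, hk1, hkn, hc0⟩
    classical
    obtain ⟨k₀, ⟨hk₀1, hk₀n, hk₀0⟩, hk₀min⟩ :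
        ∃ k₀, (1 ≤ k₀ ∧ k₀ < n ∧ cc k₀ a = 0) ∧
          ∀ j < k₀, ¬(1 ≤ j ∧ j < n ∧ cc j a = 0) :=
      ⟨Nat.find hP, Nat.find_spec hP, fun j hj => Nat.find_min hP hj⟩
    have hpre : ∀ j, 1 ≤ j → j < k₀ → cc j a ≠ 0 := by
      intro j hj1 hjk hz
      exact hk₀min j hjk ⟨hj1, by omega, hz⟩
    have hk₀2 : 2 ≤ k₀ := by
      by_contra h
      have h1 : k₀ = 1 := by omega
      rw [h1, cc_one] at hk₀0
      norm_num at hk₀0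
    have hagr : Dd a 1 k₀ = Dd a (-1) k₀ := DdAgree a k₀ hpre
    have hne : Dd a 1 n ≠ Dd a (-1) n := by
      have := Dd_ne a ha ha2 k₀ hk₀2 hk₀0 hagr (n - k₀ - 1)
      rwa [show k₀ + 1 + (n - k₀ - 1) = n by omega] at this
    have hnd : ¬ DifferentiableAt ℝ (fun b => (tent b)^[n] 0) a := by
      intro hdiff
      have hd := hdiff.hasDerivAt
      have e1 : Dd a 1 n = deriv (fun b => (tent b)^[n] 0) a :=
        UniqueDiffWithinAt.eq_deriv (Set.Ici a) (uniqueDiffOn_Ici a a Set.self_mem_Ici)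
          hplus hd.hasDerivWithinAt
      have e2 : Dd a (-1) n = deriv (fun b => (tent b)^[n] 0) a :=
        UniqueDiffWithinAt.eq_deriv (Set.Iic a) (uniqueDiffOn_Iic a a Set.self_mem_Iic)
          hminus hd.hasDerivWithinAt
      exact hne (e1.trans e2.symm)
    rw [deriv_zero_of_not_differentiableAt hnd, Real.sign_zero]
end

section
/- Suppose C₀ > 1, δ > 0, n ≥ 2, and g: [a₁, a₂] → ℝ is differentiable with δ·t^{n-1} ≤ |g'(t)| ≤ C₀·t^{n-1}·a₂ for all t ∈ [a₁,a₂] ⊂ [√2, 2], and |g(a₂) - g(a₁)| < 2. Then (a₂/a₁)^n ≤ 1 + 2n/(δ·a₁^n), and in particular (a₂/a₁)^n is bounded above by an absolute constant depending only on δ. -/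
lemma aux_n_le : ∀ n : ℕ, (n : ℝ) ≤ 2 * Real.sqrt 2 ^ n := by
  have hs1 : (1:ℝ) ≤ Real.sqrt 2 := by
    rw [show (1:ℝ) = Real.sqrt 1 by simp]
    exact Real.sqrt_le_sqrt (by norm_num)
  intro n
  induction n using Nat.twoStepInduction with
  | zero => norm_num
  | one => push_cast; nlinarith
  | more n ih _ =>
    have hsq : Real.sqrt 2 ^ (n + 2) = 2 * Real.sqrt 2 ^ n := by
      rw [pow_add, Real.sq_sqrt (by norm_num : (0:ℝ) ≤ 2)]; ring
    have h1 : (1:ℝ) ≤ Real.sqrt 2 ^ n := one_le_pow₀ hs1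
    push_cast
    rw [hsq]
    nlinarith

theorem stmt9 (C₀ δ : ℝ) (hC₀ : 1 < C₀) (hδ : 0 < δ) (n : ℕ) (hn : 2 ≤ n)
    (a₁ a₂ : ℝ) (h1 : Real.sqrt 2 ≤ a₁) (h12 : a₁ ≤ a₂) (h2 : a₂ ≤ 2)
    (g g' : ℝ → ℝ)
    (hderiv : ∀ t ∈ Set.Icc a₁ a₂, HasDerivAt g (g' t) t)
    (hlow : ∀ t ∈ Set.Icc a₁ a₂, δ * t ^ (n - 1) ≤ |g' t|)
    (hup : ∀ t ∈ Set.Icc a₁ a₂, |g' t| ≤ C₀ * t ^ (n - 1) * a₂)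
    (hbd : |g a₂ - g a₁| < 2) :
    (a₂ / a₁) ^ n ≤ 1 + 2 * n / (δ * a₁ ^ n) ∧ (a₂ / a₁) ^ n ≤ 1 + 4 / δ := by
  have hs2 : (0:ℝ) < Real.sqrt 2 := Real.sqrt_pos.mpr (by norm_num)
  have ha1 : (0:ℝ) < a₁ := lt_of_lt_of_le hs2 h1
  have hnpos : (0:ℝ) < n := by positivity
  have hpowpos : (0:ℝ) < a₁ ^ n := pow_pos ha1 n
  -- every t in Icc is positive
  have htpos : ∀ t ∈ Set.Icc a₁ a₂, (0:ℝ) < t ^ (n - 1) := by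
    intro t ht
    exact pow_pos (lt_of_lt_of_le ha1 ht.1) _
  have hne : ∀ t ∈ Set.Icc a₁ a₂, g' t ≠ 0 := by
    intro t ht h0
    have := hlow t ht
    rw [h0, abs_zero] at this
    nlinarith [htpos t ht]
  -- key: δ/n * (a₂^n - a₁^n) < 2
  have key : δ / n * (a₂ ^ n - a₁ ^ n) < 2 := by
    have hconv : Convex ℝ (Set.Icc a₁ a₂) := convex_Icc _ _
    have hdw : ∀ x ∈ Set.Icc a₁ a₂, HasDerivWithinAt g (g' x) (Set.Icc a₁ a₂) x :=
      fun x hx => (hderiv x hx).hasDerivWithinAt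
    have hint : interior (Set.Icc a₁ a₂) ⊆ Set.Icc a₁ a₂ := interior_subset
    have hcont : ContinuousOn g (Set.Icc a₁ a₂) :=
      fun x hx => (hderiv x hx).continuousAt.continuousWithinAt
    -- derivative of t ↦ δ/n * t^n
    have hpder : ∀ t : ℝ, HasDerivAt (fun t : ℝ => δ / n * t ^ n) (δ * t ^ (n - 1)) t := by
      intro t
      have h := (hasDerivAt_pow n t).const_mul (δ / n)
      have : δ / n * (n * t ^ (n - 1)) = δ * t ^ (n - 1) := by
        field_simp
      rwa [this] at h
    rcases hasDerivWithinAt_forall_lt_or_forall_gt_of_forall_ne hconv hdw hne with hneg | hpos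
    · -- g' < 0 on Icc : use f = -g
      set h : ℝ → ℝ := fun t => -g t - δ / n * t ^ n with hh
      have hmono : MonotoneOn h (Set.Icc a₁ a₂) := by
        apply monotoneOn_of_hasDerivWithinAt_nonneg hconv
          (f' := fun t => -g' t - δ * t ^ (n - 1))
        · exact (hcont.neg).sub (Continuous.continuousOn (by continuity))
        · intro x hx
          exact (((hderiv x (hint hx)).neg).sub (hpder x)).hasDerivWithinAt.mono hint
        · intro x hx
          have hl := hlow x (hint hx)
          rw [abs_of_neg (hneg x (hint hx))] at hl
          linarith
      have := hmono (Set.left_mem_Icc.mpr h12) (Set.right_mem_Icc.mpr h12) h12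
      simp only [hh] at this
      have habs : g a₁ - g a₂ ≤ |g a₂ - g a₁| := by
        rw [abs_sub_comm]; exact le_abs_self _
      nlinarith
    · -- g' > 0 on Icc
      set h : ℝ → ℝ := fun t => g t - δ / n * t ^ n with hh
      have hmono : MonotoneOn h (Set.Icc a₁ a₂) := by
        apply monotoneOn_of_hasDerivWithinAt_nonneg hconv
          (f' := fun t => g' t - δ * t ^ (n - 1))
        · exact hcont.sub (Continuous.continuousOn (by continuity))
        · intro x hx
          exact ((hderiv x (hint hx)).sub (hpder x)).hasDerivWithinAt.mono hint
        · intro x hx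
          have hl := hlow x (hint hx)
          rw [abs_of_pos (hpos x (hint hx))] at hl
          linarith
      have := hmono (Set.left_mem_Icc.mpr h12) (Set.right_mem_Icc.mpr h12) h12
      simp only [hh] at this
      have habs : g a₂ - g a₁ ≤ |g a₂ - g a₁| := le_abs_self _
      nlinarith
  -- from key: a₂^n - a₁^n ≤ 2n/δ
  have hdiff : a₂ ^ n - a₁ ^ n ≤ 2 * n / δ := by
    rw [div_mul_eq_mul_div, div_lt_iff₀ hnpos] at key
    rw [le_div_iff₀ hδ]
    nlinarith
  have hfirst : (a₂ / a₁) ^ n ≤ 1 + 2 * n / (δ * a₁ ^ n) := by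
    rw [div_pow, div_le_iff₀ hpowpos]
    have : (1 + 2 * ↑n / (δ * a₁ ^ n)) * a₁ ^ n = a₁ ^ n + 2 * n / δ := by
      field_simp
    rw [this]
    linarith
  refine ⟨hfirst, hfirst.trans ?_⟩
  -- need 2n/(δ a₁^n) ≤ 4/δ, i.e. n ≤ 2 a₁^n
  have hge : Real.sqrt 2 ^ n ≤ a₁ ^ n := pow_le_pow_left₀ hs2.le h1 n
  have hle : (n : ℝ) ≤ 2 * a₁ ^ n := le_trans (aux_n_le n) (by linarith)
  have : 2 * (n:ℝ) / (δ * a₁ ^ n) ≤ 4 / δ := by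
    rw [div_le_div_iff₀ (by positivity) hδ]
    nlinarith
  linarith
end

section
/- Let f_a(x) = 1 - a|x| be the tent map with a ∈ [𝕒_r, 2] for some r ≥ 2, where 𝕒_r is the unique parameter in (√2,2) with c_k(𝕒_r) < 0 for 2 ≤ k ≤ r and c_{r+1}(𝕒_r) = 𝕒_r - 1. If x ∈ (a-1, 1], then f_a^k(x) < a - 1 for all 1 ≤ k < r. -/
lemma tent_of_neg (t y : ℝ) (hy : y < 0) : tent t y = 1 + t * y := by
  simp [tent, abs_of_neg hy]

lemma tent_of_nonneg (t y : ℝ) (hy : 0 ≤ y) : tent t y = 1 - t * y := by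
  simp [tent, abs_of_nonneg hy]

theorem stmt11 (r : ℕ) (hr : 2 ≤ r) (b : ℝ) (hb : b ∈ Set.Ioo (Real.sqrt 2) 2)
    (hbneg : ∀ k, 2 ≤ k → k ≤ r → (tent b)^[k] 0 < 0)
    (hbhit : (tent b)^[r + 1] 0 = b - 1)
    (a : ℝ) (hab : b ≤ a) (ha2 : a ≤ 2)
    (x : ℝ) (hx1 : a - 1 < x) (hx2 : x ≤ 1) :
    ∀ k, 1 ≤ k → k < r → (tent a)^[k] x < a - 1 := by
  have hsqrt : (1:ℝ) < Real.sqrt 2 := by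
    nlinarith [Real.sq_sqrt (show (0:ℝ) ≤ 2 by norm_num), Real.sqrt_nonneg 2]
  have hb1 : 1 < b := hsqrt.trans hb.1
  have ha1 : 1 < a := hb1.trans_le hab
  have ha0 : 0 < a := by linarith
  have hb0 : 0 < b := by linarith
  -- two-step computation of the start of the orbit
  have hc2 : ∀ t : ℝ, 0 < t → (tent t)^[2] 0 = 1 - t := by
    intro t ht
    have h1 : tent t 0 = 1 := by simp [tent]
    simp only [Function.iterate_succ_apply', Function.iterate_zero_apply]
    rw [h1, tent_of_nonneg t 1 (by norm_num)]; ring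
  -- comparison of critical orbits: c_k(a) ≤ c_k(b) (< 0) for 2 ≤ k ≤ r
  have hA : ∀ k, 2 ≤ k → k ≤ r → (tent a)^[k] 0 ≤ (tent b)^[k] 0 := by
    intro k hk
    induction k, hk using Nat.le_induction with
    | base =>
      intro _
      rw [hc2 a ha0, hc2 b hb0]; linarith
    | succ n hn ih =>
      intro hle
      have hnr : n ≤ r := by omega
      have ihn := ih hnr
      have hnegb : (tent b)^[n] 0 < 0 := hbneg n hn hnr
      have hnega : (tent a)^[n] 0 < 0 := lt_of_le_of_lt ihn hnegb
      rw [Function.iterate_succ_apply', Function.iterate_succ_apply',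
        tent_of_neg a _ hnega, tent_of_neg b _ hnegb]
      nlinarith
  have hAneg : ∀ k, 2 ≤ k → k ≤ r → (tent a)^[k] 0 < 0 := fun k h1 h2 =>
    lt_of_le_of_lt (hA k h1 h2) (hbneg k h1 h2)
  -- chain: f_a^k(x) < c_{k+2}(a) for 1 ≤ k ≤ r - 1
  have hchain : ∀ k, 1 ≤ k → k ≤ r - 1 → (tent a)^[k] x < (tent a)^[k + 2] 0 := by
    intro k hk
    induction k, hk using Nat.le_induction with
    | base =>
      intro _
      have h2 : (tent a)^[2] 0 = 1 - a := hc2 a ha0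
      have h2neg : (1:ℝ) - a < 0 := by linarith
      have h3 : (tent a)^[3] 0 = 1 + a * (1 - a) := by
        have : (3:ℕ) = 2 + 1 := rfl
        rw [this, Function.iterate_succ_apply', h2, tent_of_neg a _ h2neg]
      rw [Function.iterate_one, h3, tent_of_nonneg a x (by linarith)]
      nlinarith
    | succ n hn ih =>
      intro hle
      have hnr : n ≤ r - 1 := by omega
      have ihn := ih hnr
      have hcneg : (tent a)^[n + 2] 0 < 0 := hAneg (n + 2) (by omega) (by omega)
      have hyn : (tent a)^[n] x < 0 := lt_trans ihn hcneg
      have : n + 1 + 2 = (n + 2) + 1 := by ring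
      rw [Function.iterate_succ_apply', this, Function.iterate_succ_apply',
        tent_of_neg a _ hyn, tent_of_neg a _ hcneg]
      nlinarith
  -- conclusion
  intro k hk1 hkr
  have hkr1 : k ≤ r - 1 := by omega
  have hch := hchain k hk1 hkr1
  by_cases hcase : k + 2 ≤ r
  · have := hAneg (k + 2) (by omega) hcase
    linarith
  · -- k = r - 1, so k + 2 = r + 1
    have hkeq : k + 2 = r + 1 := by omega
    rw [hkeq] at hch
    -- compute c_{r+1}(a) ≤ a - 1
    have hcrb : (tent b)^[r] 0 < 0 := hbneg r hr le_rfl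
    have hcra : (tent a)^[r] 0 < 0 := hAneg r hr le_rfl
    have hcrab : (tent a)^[r] 0 ≤ (tent b)^[r] 0 := hA r hr le_rfl
    have hhit : 1 + b * (tent b)^[r] 0 = b - 1 := by
      have h := hbhit
      rw [Function.iterate_succ_apply', tent_of_neg b _ hcrb] at h
      exact h
    have hca1 : (tent a)^[r + 1] 0 = 1 + a * (tent a)^[r] 0 := by
      rw [Function.iterate_succ_apply', tent_of_neg a _ hcra]
    have hle : (tent a)^[r + 1] 0 ≤ a - 1 := by
      rw [hca1]
      have h1 : a * (tent a)^[r] 0 ≤ a * (tent b)^[r] 0 :=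
        mul_le_mul_of_nonneg_left hcrab (le_of_lt ha0)
      nlinarith [mul_le_mul_of_nonneg_left hhit.le (le_of_lt hb0)]
    linarith
end

section
/- Let μ be a Borel probability measure on I_a = [1-a, 1] that is conformal for the tent map f_a(x) = 1 - a|x| with respect to the Jacobian j_a (where j_a = 2 on [1-a, a-1]\{0} and j_a = 1 elsewhere), i.e., μ(f_a E) = ∫_E j_a dμ whenever f_a is injective on the Borel set E. If a ∈ [𝕒_r, 2] (so that every point of (a-1,1] has its next r-1 iterates in [1-a, a-1)) and J ⊂ I_a is an interval on which f_a^r is injective, then μ(f_a^r J) ≥ 2^{r-1} μ(J). -/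
theorem stmt12 (a : ℝ) (ha : a ∈ Set.Icc (Real.sqrt 2) 2) (r : ℕ) (hr : 2 ≤ r)
    (μ : MeasureTheory.Measure ℝ) [MeasureTheory.IsProbabilityMeasure μ]
    (hconf : ∀ E : Set ℝ, MeasurableSet E → E ⊆ Set.Icc (1 - a) 1 →
      Set.InjOn (tent a) E →
      μ (tent a '' E) = ∫⁻ x in E,
        (if x ∈ Set.Icc (1 - a) (a - 1) ∧ x ≠ 0 then (2 : ENNReal) else 1) ∂μ)
    (hwin : ∀ x : ℝ, a - 1 < x → x ≤ 1 → ∀ k, 1 ≤ k → k < r → (tent a)^[k] x < a - 1)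
    (J : Set ℝ) (hJ : J ⊆ Set.Icc (1 - a) 1) (hJm : MeasurableSet J)
    (hJc : J.OrdConnected) (hinj : Set.InjOn ((tent a)^[r]) J) :
    2 ^ (r - 1) * μ J ≤ μ ((tent a)^[r] '' J) := by
  classical
  obtain ⟨ha1, ha2⟩ := ha
  have ha1' : (1:ℝ) < a := by
    refine lt_of_lt_of_le ?_ ha1
    have h : Real.sqrt 1 < Real.sqrt 2 := Real.sqrt_lt_sqrt (by norm_num) (by norm_num)
    simpa using h
  have ha0 : (0:ℝ) < a := by linarith
  set I := Set.Icc (1-a) 1 with hIdef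
  set Z := Set.Icc (1-a) (a-1) with hZdef
  have hZI : Z ⊆ I := Set.Icc_subset_Icc le_rfl (by linarith)
  have hcont : Continuous (tent a) := by
    have : Continuous fun x : ℝ => 1 - a * |x| :=
      continuous_const.sub (continuous_const.mul continuous_abs)
    exact this
  have hcontIter : ∀ n, Continuous ((tent a)^[n]) := fun n => hcont.iterate n
  have hmapsI : ∀ x ∈ I, tent a x ∈ I := by
    intro x hx
    obtain ⟨hx1, hx2⟩ := hx
    have habs : |x| ≤ 1 := abs_le.2 ⟨by linarith, hx2⟩
    have h1 : a * |x| ≤ a := by nlinarith [abs_nonneg x]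
    have h2 : 0 ≤ a * |x| := mul_nonneg ha0.le (abs_nonneg x)
    constructor
    · show 1 - a ≤ 1 - a * |x|
      linarith
    · show 1 - a * |x| ≤ 1
      linarith
  have hiterI : ∀ n, ∀ x ∈ I, (tent a)^[n] x ∈ I := by
    intro n
    induction n with
    | zero => intro x hx; simpa using hx
    | succ n ih =>
      intro x hx
      rw [Function.iterate_succ_apply']
      exact hmapsI _ (ih x hx)
  -- basic values
  have h0 : tent a 0 = 1 := by simp [tent]
  have h1v : tent a 1 = 1 - a := by simp [tent]
  have h1a : tent a (1-a) = tent a (a-1) := by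
    have : |1 - a| = |a - 1| := abs_sub_comm 1 a
    simp [tent, this]
  have h1aZ : (1-a) ∈ Z ∧ (1-a) ≠ (0:ℝ) := by
    constructor
    · exact ⟨le_rfl, by linarith⟩
    · intro h; linarith [h]
  have h1I : (1:ℝ) ∈ I := ⟨by linarith, le_rfl⟩
  have h0I : (0:ℝ) ∈ I := ⟨by linarith, by norm_num⟩
  -- conformality at singletons
  have hsing : ∀ x ∈ I, μ {tent a x}
      = (if x ∈ Z ∧ x ≠ 0 then (2:ENNReal) else 1) * μ {x} := by
    intro x hx
    have h := hconf {x} (measurableSet_singleton x) (by simpa using hx)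
      (Set.injOn_singleton _ _)
    rw [Set.image_singleton] at h
    rw [h, MeasureTheory.lintegral_singleton]
  have hstep_mono : ∀ x ∈ I, μ {x} ≤ μ {tent a x} := by
    intro x hx
    rw [hsing x hx]
    split
    · calc μ {x} = 1 * μ {x} := (one_mul _).symm
        _ ≤ 2 * μ {x} := by gcongr; norm_num
    · rw [one_mul]
  have hstep_double : ∀ x ∈ I, x ∈ Z → x ≠ 0 → μ {tent a x} = 2 * μ {x} := by
    intro x hx hxZ hx0
    rw [hsing x hx, if_pos ⟨hxZ, hx0⟩]
  have hiter_mono : ∀ n, ∀ x ∈ I, μ {x} ≤ μ {(tent a)^[n] x} := by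
    intro n
    induction n with
    | zero => intro x hx; simp
    | succ n ih =>
      intro x hx
      rw [Function.iterate_succ_apply']
      exact (ih x hx).trans (hstep_mono _ (hiterI n x hx))
  -- four-step doubling along orbits
  have hfour : ∀ x ∈ I, 2 * μ {x} ≤ μ {(tent a)^[4] x} := by
    intro x hx
    by_cases hxa : x ≤ a - 1
    · have hxZ : x ∈ Z := ⟨hx.1, hxa⟩
      by_cases hx0 : x = 0
      · subst hx0
        have e1 : (tent a)^[1] (0:ℝ) = 1 := by simpa using h0
        have e2 : (tent a)^[2] (0:ℝ) = 1 - a := by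
          rw [show (2:ℕ) = 1 + 1 from rfl, Function.iterate_add_apply]
          simp only [Function.iterate_one]
          rw [h0, h1v]
        have e3 : (tent a)^[3] (0:ℝ) = tent a (1-a) := by
          rw [show (3:ℕ) = 1 + 2 from rfl, Function.iterate_add_apply, e2]
          simp
        have e4 : (tent a)^[4] (0:ℝ) = tent a ((tent a)^[3] 0) := by
          rw [Function.iterate_succ_apply']
        have hm : μ {(0:ℝ)} ≤ μ {(1-a : ℝ)} := by
          have := hiter_mono 2 0 h0I
          rwa [e2] at this
        have hd : μ {tent a (1-a)} = 2 * μ {(1-a:ℝ)} :=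
          hstep_double _ (hZI h1aZ.1) h1aZ.1 h1aZ.2
        have h3I : (tent a)^[3] (0:ℝ) ∈ I := hiterI 3 0 h0I
        calc 2 * μ {(0:ℝ)} ≤ 2 * μ {(1-a:ℝ)} := by gcongr
          _ = μ {tent a (1-a)} := hd.symm
          _ = μ {(tent a)^[3] (0:ℝ)} := by rw [e3]
          _ ≤ μ {(tent a)^[4] (0:ℝ)} := by
              rw [e4]; exact hstep_mono _ h3I
      · have hd : μ {tent a x} = 2 * μ {x} := hstep_double x hx hxZ hx0
        have hfxI : tent a x ∈ I := hmapsI x hx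
        have : μ {tent a x} ≤ μ {(tent a)^[3] (tent a x)} := hiter_mono 3 _ hfxI
        calc 2 * μ {x} = μ {tent a x} := hd.symm
          _ ≤ μ {(tent a)^[3] (tent a x)} := this
          _ = μ {(tent a)^[4] x} := by rw [← Function.iterate_succ_apply]
    · push_neg at hxa
      have hy_lt : tent a x < a - 1 := by
        have := hwin x hxa hx.2 1 le_rfl (by omega)
        simpa using this
      have hyI : tent a x ∈ I := hmapsI x hx
      have hyZ : tent a x ∈ Z := ⟨hyI.1, hy_lt.le⟩
      by_cases hy0 : tent a x = 0
      · have e2 : (tent a)^[2] x = 1 := by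
          rw [show (2:ℕ) = 1 + 1 from rfl, Function.iterate_add_apply]
          simp [hy0, h0]
        have e3 : (tent a)^[3] x = 1 - a := by
          rw [show (3:ℕ) = 1 + 2 from rfl, Function.iterate_add_apply]
          simp only [Function.iterate_one]
          rw [show (tent a)^[2] x = 1 from e2] at *
          exact h1v
        have e4 : (tent a)^[4] x = tent a (1 - a) := by
          rw [Function.iterate_succ_apply', e3]
        have hm : μ {x} ≤ μ {(1-a:ℝ)} := by
          have := hiter_mono 3 x hx
          rwa [e3] at this
        have hd : μ {tent a (1-a)} = 2 * μ {(1-a:ℝ)} :=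
          hstep_double _ (hZI h1aZ.1) h1aZ.1 h1aZ.2
        calc 2 * μ {x} ≤ 2 * μ {(1-a:ℝ)} := by gcongr
          _ = μ {tent a (1-a)} := hd.symm
          _ = μ {(tent a)^[4] x} := by rw [e4]
      · have hm : μ {x} ≤ μ {tent a x} := hstep_mono x hx
        have hd : μ {tent a (tent a x)} = 2 * μ {tent a x} :=
          hstep_double _ hyI hyZ hy0
        have e2 : (tent a)^[2] x = tent a (tent a x) := by
          rw [show (2:ℕ) = 1 + 1 from rfl, Function.iterate_add_apply]; simp
        have h2I : (tent a)^[2] x ∈ I := hiterI 2 x hx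
        have e4 : (tent a)^[4] x = (tent a)^[2] ((tent a)^[2] x) := by
          rw [show (4:ℕ) = 2 + 2 from rfl, Function.iterate_add_apply]
        calc 2 * μ {x} ≤ 2 * μ {tent a x} := by gcongr
          _ = μ {tent a (tent a x)} := hd.symm
          _ = μ {(tent a)^[2] x} := by rw [e2]
          _ ≤ μ {(tent a)^[4] x} := by
              rw [e4]; exact hiter_mono 2 _ h2I
  -- singleton at 0 is null
  have hnull : μ {(0:ℝ)} = 0 := by
    have hgrow : ∀ n : ℕ, 2 ^ n * μ {(0:ℝ)} ≤ μ {(tent a)^[4*n] (0:ℝ)} := by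
      intro n
      induction n with
      | zero => simp
      | succ n ih =>
        have e : (tent a)^[4*(n+1)] (0:ℝ) = (tent a)^[4] ((tent a)^[4*n] 0) := by
          rw [show 4*(n+1) = 4 + 4*n by ring, Function.iterate_add_apply]
        calc 2 ^ (n+1) * μ {(0:ℝ)} = 2 * (2 ^ n * μ {(0:ℝ)}) := by ring
          _ ≤ 2 * μ {(tent a)^[4*n] (0:ℝ)} := by gcongr
          _ ≤ μ {(tent a)^[4] ((tent a)^[4*n] (0:ℝ))} := hfour _ (hiterI _ 0 h0I)
          _ = μ {(tent a)^[4*(n+1)] (0:ℝ)} := by rw [e]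
    have hb : ∀ n : ℕ, μ {(0:ℝ)} ≤ (2:ENNReal)⁻¹ ^ n := by
      intro n
      have h1 : 2 ^ n * μ {(0:ℝ)} ≤ 1 :=
        (hgrow n).trans (MeasureTheory.prob_le_one)
      rw [← ENNReal.inv_pow]
      rw [ENNReal.le_inv_iff_mul_le]
      calc μ {(0:ℝ)} * 2 ^ n = 2 ^ n * μ {(0:ℝ)} := mul_comm _ _
        _ ≤ 1 := h1
    have htend : Filter.Tendsto (fun n : ℕ => (2:ENNReal)⁻¹ ^ n)
        Filter.atTop (nhds 0) :=
      ENNReal.tendsto_pow_atTop_nhds_zero_of_lt_one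
        (by simp [ENNReal.inv_lt_one])
    have := ge_of_tendsto' htend hb
    exact le_antisymm this (by positivity)
  -- conformality consequences for sets
  have hCi : ∀ E : Set ℝ, MeasurableSet E → E ⊆ I → Set.InjOn (tent a) E →
      μ E ≤ μ (tent a '' E) := by
    intro E hEm hEI hEinj
    rw [hconf E hEm hEI hEinj]
    calc μ E = ∫⁻ _ in E, 1 ∂μ := (MeasureTheory.setLIntegral_one E).symm
      _ ≤ ∫⁻ x in E, (if x ∈ Z ∧ x ≠ 0 then (2:ENNReal) else 1) ∂μ := by
          apply MeasureTheory.lintegral_mono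
          intro x
          dsimp only
          split <;> norm_num
  have hCii : ∀ E : Set ℝ, MeasurableSet E → E ⊆ Z → Set.InjOn (tent a) E →
      2 * μ E ≤ μ (tent a '' E) := by
    intro E hEm hEZ hEinj
    rw [hconf E hEm (hEZ.trans hZI) hEinj]
    have hae : ∀ᵐ x ∂μ, x ∈ E →
        (if x ∈ Z ∧ x ≠ 0 then (2:ENNReal) else 1) = 2 := by
      rw [MeasureTheory.ae_iff]
      refine MeasureTheory.measure_mono_null ?_ hnull
      intro x hxbad
      simp only [Set.mem_setOf_eq, not_forall] at hxbad
      obtain ⟨hxE, hbad⟩ := hxbad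
      by_contra hx0
      exact hbad (if_pos ⟨hEZ hxE, hx0⟩)
    rw [MeasureTheory.setLIntegral_congr_fun_ae hEm hae]
    rw [MeasureTheory.setLIntegral_const]
  -- chain doubling lemma
  have hchain : ∀ n : ℕ, ∀ P : Set ℝ, MeasurableSet P → P ⊆ I →
      Set.InjOn ((tent a)^[n]) P → (∀ x ∈ P, ∀ j < n, (tent a)^[j] x ∈ Z) →
      2 ^ n * μ P ≤ μ ((tent a)^[n] '' P) := by
    intro n
    induction n with
    | zero => intro P hPm hPI _ _; simp
    | succ n ih =>
      intro P hPm hPI hPinj hPzone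
      have hinjn : Set.InjOn ((tent a)^[n]) P := by
        intro x hx y hy h
        apply hPinj hx hy
        rw [Function.iterate_succ_apply', Function.iterate_succ_apply', h]
      have hQm : MeasurableSet ((tent a)^[n] '' P) :=
        hPm.image_of_continuousOn_injOn (hcontIter n).continuousOn hinjn
      have hQZ : ((tent a)^[n] '' P) ⊆ Z := by
        rintro y ⟨x, hx, rfl⟩
        exact hPzone x hx n (Nat.lt_succ_self n)
      have hQI : ((tent a)^[n] '' P) ⊆ I := hQZ.trans hZI
      have hQinj : Set.InjOn (tent a) ((tent a)^[n] '' P) := by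
        rintro y ⟨x, hx, rfl⟩ y' ⟨x', hx', rfl⟩ h
        have : (tent a)^[n+1] x = (tent a)^[n+1] x' := by
          rw [Function.iterate_succ_apply', Function.iterate_succ_apply']
          exact h
        rw [hPinj hx hx' this]
      have hIH : 2 ^ n * μ P ≤ μ ((tent a)^[n] '' P) :=
        ih P hPm hPI hinjn (fun x hx j hj => hPzone x hx j (Nat.lt_succ_of_lt hj))
      have himg : (tent a)^[n+1] '' P = tent a '' ((tent a)^[n] '' P) := by
        rw [← Set.image_comp, ← Function.iterate_succ']
      calc 2 ^ (n+1) * μ P = 2 * (2 ^ n * μ P) := by ring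
        _ ≤ 2 * μ ((tent a)^[n] '' P) := by gcongr
        _ ≤ μ (tent a '' ((tent a)^[n] '' P)) := hCii _ hQm hQZ hQinj
        _ = μ ((tent a)^[n+1] '' P) := by rw [himg]
  -- injectivity of partial iterates on J
  have hinj_iter : ∀ m, m ≤ r → Set.InjOn ((tent a)^[m]) J := by
    intro m hm x hx y hy h
    apply hinj hx hy
    have e : r = (r - m) + m := by omega
    rw [e, Function.iterate_add_apply, Function.iterate_add_apply, h]
  -- no two windows
  have hdis2 : ∀ k l x, k < l → l < r → x ∈ I →
      a - 1 < (tent a)^[k] x → a - 1 < (tent a)^[l] x → False := by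
    intro k l x hkl hlr hxI hk hl
    have hkI : (tent a)^[k] x ∈ I := hiterI k x hxI
    have := hwin _ hk hkI.2 (l - k) (by omega) (by omega)
    rw [← Function.iterate_add_apply, show l - k + k = l by omega] at this
    linarith
  -- the pieces
  set E : ℕ → Set ℝ := fun k =>
    if k = r then J ∩ ⋂ j ∈ Finset.range r, (tent a)^[j] ⁻¹' Set.Iic (a-1)
    else J ∩ (tent a)^[k] ⁻¹' Set.Ioi (a-1) with hEdef
  have hEJ : ∀ k, E k ⊆ J := by
    intro k
    simp only [hEdef]
    split <;> exact Set.inter_subset_left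
  have hEm : ∀ k, MeasurableSet (E k) := by
    intro k
    simp only [hEdef]
    split
    · exact hJm.inter (MeasurableSet.biInter (Finset.range r).countable_toSet
        (fun j _ => (hcontIter j).measurable measurableSet_Iic))
    · exact hJm.inter ((hcontIter k).measurable measurableSet_Ioi)
  have hEdisj : (↑(Finset.range (r+1)) : Set ℕ).PairwiseDisjoint E := by
    intro k hk l hl hkl
    simp only [Finset.coe_range, Set.mem_Iio] at hk hl
    rw [Function.onFun, Set.disjoint_left]
    intro x hxk hxl
    rcases Nat.lt_or_ge k r with hkr | hkr
    · rcases Nat.lt_or_ge l r with hlr | hlr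
      · -- both windows
        have hxk' : a - 1 < (tent a)^[k] x := by
          have := hxk; simp only [hEdef, if_neg (by omega : ¬ k = r)] at this
          exact this.2
        have hxl' : a - 1 < (tent a)^[l] x := by
          have := hxl; simp only [hEdef, if_neg (by omega : ¬ l = r)] at this
          exact this.2
        rcases lt_or_gt_of_ne hkl with h | h
        · exact hdis2 k l x h hlr (hJ (hEJ k hxk)) hxk' hxl'
        · exact hdis2 l k x h hkr (hJ (hEJ k hxk)) hxl' hxk'
      · have hlr' : l = r := by omega
        have hxk' : a - 1 < (tent a)^[k] x := by
          have := hxk; simp only [hEdef, if_neg (by omega : ¬ k = r)] at this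
          exact this.2
        have := hxl
        simp only [hEdef, if_pos hlr', Set.mem_inter_iff, Set.mem_iInter] at this
        have h2 := this.2 k (Finset.mem_range.2 hkr)
        simp only [Set.mem_preimage, Set.mem_Iic] at h2
        linarith
    · have hkr' : k = r := by omega
      have hlr : l < r := by omega
      have hxl' : a - 1 < (tent a)^[l] x := by
        have := hxl; simp only [hEdef, if_neg (by omega : ¬ l = r)] at this
        exact this.2
      have := hxk
      simp only [hEdef, if_pos hkr', Set.mem_inter_iff, Set.mem_iInter] at this
      have h2 := this.2 l (Finset.mem_range.2 hlr)
      simp only [Set.mem_preimage, Set.mem_Iic] at h2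
      linarith
  have hEunion : ⋃ k ∈ Finset.range (r+1), E k = J := by
    apply Set.Subset.antisymm
    · apply Set.iUnion₂_subset
      intro k _
      exact hEJ k
    · intro x hx
      by_cases hall : ∀ j < r, (tent a)^[j] x ≤ a - 1
      · refine Set.mem_biUnion (Finset.mem_range.2 (Nat.lt_succ_self r)) ?_
        simp only [hEdef, if_pos rfl, Set.mem_inter_iff, Set.mem_iInter]
        exact ⟨hx, fun j hj => by
          simp only [Set.mem_preimage, Set.mem_Iic]
          exact hall j (Finset.mem_range.1 hj)⟩
      · push_neg at hall
        obtain ⟨k, hkr, hk⟩ := hall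
        refine Set.mem_biUnion (Finset.mem_range.2 (Nat.lt_succ_of_lt hkr)) ?_
        simp only [hEdef, if_neg (Nat.ne_of_lt hkr), Set.mem_inter_iff,
          Set.mem_preimage, Set.mem_Ioi]
        exact ⟨hx, hk⟩
  -- zone membership for pieces
  have hEzone : ∀ k ≤ r, ∀ x ∈ E k, ∀ j, j < r → j ≠ k → (tent a)^[j] x ∈ Z := by
    intro k hk x hx j hjr hjk
    have hxJ : x ∈ J := hEJ k hx
    have hxI : x ∈ I := hJ hxJ
    have hjI : (tent a)^[j] x ∈ I := hiterI j x hxI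
    refine ⟨hjI.1, ?_⟩
    by_contra hgt
    push_neg at hgt
    rcases Nat.lt_or_ge k r with hkr | hkr
    · have hxk' : a - 1 < (tent a)^[k] x := by
        have := hx; simp only [hEdef, if_neg (by omega : ¬ k = r)] at this
        exact this.2
      rcases lt_or_gt_of_ne hjk with h | h
      · exact hdis2 j k x h hkr hxI hgt hxk'
      · exact hdis2 k j x h hjr hxI hxk' hgt
    · have hkr' : k = r := by omega
      have := hx
      simp only [hEdef, if_pos hkr', Set.mem_inter_iff, Set.mem_iInter] at this
      have h2 := this.2 j (Finset.mem_range.2 hjr)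
      simp only [Set.mem_preimage, Set.mem_Iic] at h2
      linarith
  -- per piece bound
  have hpiece : ∀ k ≤ r, 2 ^ (r-1) * μ (E k) ≤ μ ((tent a)^[r] '' E k) := by
    intro k hk
    have hEI : E k ⊆ I := (hEJ k).trans hJ
    rcases Nat.lt_or_ge k r with hkr | hkr
    · -- window at k
      set m := r - 1 - k with hm
      have hm1 : m + (k + 1) = r := by omega
      have hm2 : m + k = r - 1 := by omega
      have hinjk1 : Set.InjOn ((tent a)^[k+1]) (E k) :=
        (hinj_iter (k+1) (by omega)).mono (hEJ k)
      -- phase 1: first k steps all in the zone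
      have hA : 2 ^ k * μ (E k) ≤ μ ((tent a)^[k] '' E k) := by
        apply hchain k (E k) (hEm k) hEI ((hinj_iter k (by omega)).mono (hEJ k))
        intro x hx j hj
        exact hEzone k hk x hx j (by omega) (by omega)
      -- step k: at least measure preserving
      have hAm : MeasurableSet ((tent a)^[k] '' E k) :=
        (hEm k).image_of_continuousOn_injOn (hcontIter k).continuousOn
          ((hinj_iter k (by omega)).mono (hEJ k))
      have hAI : ((tent a)^[k] '' E k) ⊆ I := by
        rintro y ⟨x, hx, rfl⟩; exact hiterI k x (hEI hx)
      have hAinj : Set.InjOn (tent a) ((tent a)^[k] '' E k) := by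
        rintro y ⟨x, hx, rfl⟩ y' ⟨x', hx', rfl⟩ h
        have : (tent a)^[k+1] x = (tent a)^[k+1] x' := by
          rw [Function.iterate_succ_apply', Function.iterate_succ_apply']
          exact h
        rw [hinjk1 hx hx' this]
      have hB : μ ((tent a)^[k] '' E k) ≤ μ ((tent a)^[k+1] '' E k) := by
        have h1 := hCi _ hAm hAI hAinj
        have himg : tent a '' ((tent a)^[k] '' E k) = (tent a)^[k+1] '' E k := by
          rw [← Set.image_comp, ← Function.iterate_succ']
        rwa [himg] at h1
      -- phase 2: remaining m steps all in the zone
      have hBm : MeasurableSet ((tent a)^[k+1] '' E k) :=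
        (hEm k).image_of_continuousOn_injOn (hcontIter (k+1)).continuousOn hinjk1
      have hBI : ((tent a)^[k+1] '' E k) ⊆ I := by
        rintro y ⟨x, hx, rfl⟩; exact hiterI (k+1) x (hEI hx)
      have hBinj : Set.InjOn ((tent a)^[m]) ((tent a)^[k+1] '' E k) := by
        rintro y ⟨x, hx, rfl⟩ y' ⟨x', hx', rfl⟩ h
        rw [← Function.iterate_add_apply, ← Function.iterate_add_apply, hm1] at h
        rw [hinj ((hEJ k) hx) ((hEJ k) hx') h]
      have hBzone : ∀ y ∈ (tent a)^[k+1] '' E k, ∀ j < m, (tent a)^[j] y ∈ Z := by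
        rintro y ⟨x, hx, rfl⟩ j hj
        rw [← Function.iterate_add_apply]
        exact hEzone k hk x hx (j + (k+1)) (by omega) (by omega)
      have hC : 2 ^ m * μ ((tent a)^[k+1] '' E k)
          ≤ μ ((tent a)^[m] '' ((tent a)^[k+1] '' E k)) :=
        hchain m _ hBm hBI hBinj hBzone
      have himg2 : (tent a)^[m] '' ((tent a)^[k+1] '' E k) = (tent a)^[r] '' E k := by
        rw [← Set.image_comp, ← Function.iterate_add, hm1]
      calc 2 ^ (r-1) * μ (E k) = 2 ^ m * (2 ^ k * μ (E k)) := by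
            rw [← mul_assoc, ← pow_add, hm2]
        _ ≤ 2 ^ m * μ ((tent a)^[k] '' E k) := by gcongr
        _ ≤ 2 ^ m * μ ((tent a)^[k+1] '' E k) := by gcongr
        _ ≤ μ ((tent a)^[m] '' ((tent a)^[k+1] '' E k)) := hC
        _ = μ ((tent a)^[r] '' E k) := by rw [himg2]
    · -- no window: all r steps in the zone
      have hkr' : k = r := by omega
      have h1 : 2 ^ r * μ (E k) ≤ μ ((tent a)^[r] '' E k) := by
        apply hchain r (E k) (hEm k) hEI (hinj.mono (hEJ k))
        intro x hx j hj
        exact hEzone k hk x hx j hj (by omega)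
      calc 2 ^ (r-1) * μ (E k) ≤ 2 ^ r * μ (E k) := by
            gcongr
            · norm_num
            · omega
        _ ≤ μ ((tent a)^[r] '' E k) := h1
  -- assemble
  have himg_m : ∀ k, MeasurableSet ((tent a)^[r] '' E k) := fun k =>
    (hEm k).image_of_continuousOn_injOn (hcontIter r).continuousOn
      (hinj.mono (hEJ k))
  have himg_dis : (↑(Finset.range (r+1)) : Set ℕ).PairwiseDisjoint
      (fun k => (tent a)^[r] '' E k) := by
    intro k hk l hl hkl
    rw [Function.onFun, Set.disjoint_iff_inter_eq_empty]
    rw [← hinj.image_inter (hEJ k) (hEJ l)]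
    rw [(hEdisj hk hl hkl).inter_eq]
    exact Set.image_empty _
  have hJeq : μ J = ∑ k ∈ Finset.range (r+1), μ (E k) := by
    rw [← hEunion]
    exact MeasureTheory.measure_biUnion_finset hEdisj (fun k _ => hEm k)
  have himg_eq : μ ((tent a)^[r] '' J)
      = ∑ k ∈ Finset.range (r+1), μ ((tent a)^[r] '' E k) := by
    have : (tent a)^[r] '' J = ⋃ k ∈ Finset.range (r+1), (tent a)^[r] '' E k := by
      rw [← hEunion, Set.image_iUnion₂]
    rw [this]
    exact MeasureTheory.measure_biUnion_finset himg_dis (fun k _ => himg_m k)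
  calc 2 ^ (r-1) * μ J = ∑ k ∈ Finset.range (r+1), 2 ^ (r-1) * μ (E k) := by
        rw [hJeq, Finset.mul_sum]
    _ ≤ ∑ k ∈ Finset.range (r+1), μ ((tent a)^[r] '' E k) := by
        apply Finset.sum_le_sum
        intro k hk
        exact hpiece k (Nat.lt_succ_iff.1 (Finset.mem_range.1 hk))
    _ = μ ((tent a)^[r] '' J) := himg_eq.symm
end

section
/- Let ξ: [c₂, c₁] → ℝ satisfy |ξ| ≤ 1, and suppose ξ = -1 exactly on (ĉ₂, c₁] where the map f sends (ĉ₂, c₁] into [c₂, ĉ₂). Then for the products ξ|₁ⁿ(c) := ∏_{k=1}^{n-1} ξ(f^k c): whenever two consecutive factors include one with |value| = 1, the next has |value| = 1/2; consequently |ξ|₁^{2n+1}(c)| ≤ 2^{-n} for all n ≥ 1, and the series ∑_{n=1}^∞ ξ|₁ⁿ(c) converges absolutely. -/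
theorem stmt15 (c₂ c₁ cHat₂ c : ℝ) (h1 : c₂ ≤ cHat₂) (h2 : cHat₂ ≤ c₁)
    (hc : c ∈ Set.Icc c₂ c₁) (f ξ : ℝ → ℝ)
    (hf : Set.MapsTo f (Set.Icc c₂ c₁) (Set.Icc c₂ c₁))
    (hξbd : ∀ x ∈ Set.Icc c₂ c₁, |ξ x| ≤ 1)
    (hξone : ∀ x ∈ Set.Ioc cHat₂ c₁, ξ x = -1)
    (hξhalf : ∀ x ∈ Set.Icc c₂ c₁, x ∉ Set.Ioc cHat₂ c₁ → |ξ x| ≤ 1 / 2)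
    (hmap : Set.MapsTo f (Set.Ioc cHat₂ c₁) (Set.Ico c₂ cHat₂)) :
    (∀ k, 1 ≤ k → |ξ (f^[k] c)| = 1 → |ξ (f^[k + 1] c)| ≤ 1 / 2) ∧
    (∀ n, 1 ≤ n → |∏ k ∈ Finset.Icc 1 (2 * n), ξ (f^[k] c)| ≤ (1 / 2 : ℝ) ^ n) ∧
    Summable (fun n : ℕ => |∏ k ∈ Finset.Icc 1 n, ξ (f^[k] c)|) := by
  -- orbit stays in [c₂, c₁]
  have horb : ∀ k : ℕ, f^[k] c ∈ Set.Icc c₂ c₁ := by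
    intro k
    induction k with
    | zero => simpa using hc
    | succ k ih => rw [Function.iterate_succ_apply']; exact hf ih
  -- a factor with |ξ| = 1 lies in the interval (cHat₂, c₁]
  have hone_mem : ∀ k : ℕ, |ξ (f^[k] c)| = 1 → f^[k] c ∈ Set.Ioc cHat₂ c₁ := by
    intro k hk
    by_contra h
    have := hξhalf _ (horb k) h
    rw [hk] at this; norm_num at this
  -- first claim
  have claim1 : ∀ k, 1 ≤ k → |ξ (f^[k] c)| = 1 → |ξ (f^[k + 1] c)| ≤ 1 / 2 := by
    intro k _ hk
    have hmem := hmap (hone_mem k hk)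
    have : f^[k+1] c ∉ Set.Ioc cHat₂ c₁ := by
      rw [Function.iterate_succ_apply']
      intro h
      exact absurd h.1 (not_lt.2 (le_of_lt hmem.2))
    exact hξhalf _ (horb (k+1)) this
  -- each pair of consecutive factors has product ≤ 1/2
  have hpair : ∀ k : ℕ, 1 ≤ k → |ξ (f^[k] c)| * |ξ (f^[k+1] c)| ≤ 1 / 2 := by
    intro k hk
    by_cases h : f^[k] c ∈ Set.Ioc cHat₂ c₁
    · have h1' : |ξ (f^[k] c)| = 1 := by rw [hξone _ h]; norm_num
      rw [h1', one_mul]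
      exact claim1 k hk h1'
    · calc |ξ (f^[k] c)| * |ξ (f^[k+1] c)| ≤ (1/2) * 1 := by
            apply mul_le_mul (hξhalf _ (horb k) h) (hξbd _ (horb (k+1)))
              (abs_nonneg _) (by norm_num)
          _ = 1/2 := by ring
  -- even products bound
  have claim2 : ∀ n, 1 ≤ n → |∏ k ∈ Finset.Icc 1 (2 * n), ξ (f^[k] c)| ≤ (1 / 2 : ℝ) ^ n := by
    intro n hn
    induction n with
    | zero => omega
    | succ n ih =>
      rcases Nat.eq_or_lt_of_le hn with h0 | h0
      · -- n + 1 = 1, i.e. n = 0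
        have hn0 : n = 0 := by omega
        subst hn0
        have he : Finset.Icc 1 2 = {1, 2} := by decide
        rw [he, show ({1,2} : Finset ℕ).prod (fun k => ξ (f^[k] c))
            = ξ (f^[1] c) * ξ (f^[2] c) by
          rw [Finset.prod_insert (by decide), Finset.prod_singleton], abs_mul, pow_one]
        simpa using hpair 1 le_rfl
      · have hn1 : 1 ≤ n := by omega
        have key : Finset.Icc 1 (2 * (n+1)) =
            Finset.Icc 1 (2*n) ∪ {2*n+1, 2*n+2} := by
          ext x
          simp only [Finset.mem_Icc, Finset.mem_union, Finset.mem_insert,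
            Finset.mem_singleton]
          omega
        have hdisj : Disjoint (Finset.Icc 1 (2*n)) ({2*n+1, 2*n+2} : Finset ℕ) := by
          simp only [Finset.disjoint_left, Finset.mem_Icc, Finset.mem_insert,
            Finset.mem_singleton]
          omega
        rw [key, Finset.prod_union hdisj, abs_mul]
        have h2 : |∏ k ∈ ({2*n+1, 2*n+2} : Finset ℕ), ξ (f^[k] c)| ≤ 1/2 := by
          rw [Finset.prod_insert (by simp), Finset.prod_singleton, abs_mul]
          have := hpair (2*n+1) (by omega)
          have e : 2*n+1+1 = 2*n+2 := by omega
          rwa [e] at this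
        calc |∏ k ∈ Finset.Icc 1 (2*n), ξ (f^[k] c)| *
              |∏ k ∈ ({2*n+1, 2*n+2} : Finset ℕ), ξ (f^[k] c)|
            ≤ (1/2:ℝ)^n * (1/2) := by
              apply mul_le_mul (ih hn1) h2 (abs_nonneg _) (by positivity)
          _ = (1/2:ℝ)^(n+1) := by ring
  refine ⟨claim1, claim2, ?_⟩
  -- summability
  have hPbd : ∀ n : ℕ, |∏ k ∈ Finset.Icc 1 n, ξ (f^[k] c)| ≤ (1/2:ℝ) ^ (n / 2) := by
    intro n
    rcases Nat.even_or_odd n with ⟨m, hm⟩ | ⟨m, hm⟩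
    · subst hm
      rcases Nat.eq_zero_or_pos m with h | h
      · subst h; simp
      · have := claim2 m h
        have e : m + m = 2 * m := by ring
        have e2 : (m + m) / 2 = m := by omega
        rw [e2, e]; exact this
    · subst hm
      have e2 : (2*m + 1) / 2 = m := by omega
      rw [e2]
      rcases Nat.eq_zero_or_pos m with h | h
      · subst h
        simpa using hξbd _ (horb 1)
      · have key : Finset.Icc 1 (2*m+1) = Finset.Icc 1 (2*m) ∪ {2*m+1} := by
          ext x
          simp only [Finset.mem_Icc, Finset.mem_union, Finset.mem_singleton]
          omega
        have hdisj : Disjoint (Finset.Icc 1 (2*m)) ({2*m+1} : Finset ℕ) := by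
          simp only [Finset.disjoint_left, Finset.mem_Icc, Finset.mem_singleton]
          omega
        rw [key, Finset.prod_union hdisj, abs_mul, Finset.prod_singleton]
        calc |∏ k ∈ Finset.Icc 1 (2*m), ξ (f^[k] c)| * |ξ (f^[2*m+1] c)|
            ≤ (1/2:ℝ)^m * 1 := by
              apply mul_le_mul (claim2 m h) (hξbd _ (horb (2*m+1)))
                (abs_nonneg _) (by positivity)
          _ = (1/2:ℝ)^m := by ring
  -- compare with geometric series of ratio √(1/2)
  set a : ℝ := Real.sqrt (1/2) with ha
  have ha0 : 0 < a := Real.sqrt_pos.2 (by norm_num)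
  have ha1 : a < 1 := by
    rw [ha, show (1:ℝ) = Real.sqrt 1 by simp]
    exact Real.sqrt_lt_sqrt (by norm_num) (by norm_num)
  have hasq : a ^ 2 = 1/2 := Real.sq_sqrt (by norm_num)
  have hgeom : Summable (fun n : ℕ => a⁻¹ * a ^ n) :=
    (summable_geometric_of_lt_one ha0.le ha1).mul_left _
  apply Summable.of_nonneg_of_le (fun n => abs_nonneg _) _ hgeom
  intro n
  calc |∏ k ∈ Finset.Icc 1 n, ξ (f^[k] c)| ≤ (1/2:ℝ) ^ (n / 2) := hPbd n
    _ = a ^ (2 * (n / 2)) := by rw [pow_mul, hasq]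
    _ ≤ a ^ (n - 1) := by
        apply pow_le_pow_of_le_one ha0.le ha1.le
        omega
    _ ≤ a⁻¹ * a ^ n := by
        rcases Nat.eq_zero_or_pos n with h | h
        · subst h
          simp only [pow_zero, mul_one]
          exact (one_le_inv₀ ha0).2 ha1.le
        · have : a ^ (n - 1) * a = a ^ n := by
            rw [← pow_succ]; congr 1; omega
          rw [← this]
          field_simp
          exact le_rfl
end

section
/- Let h: I → ℝ be a monotone function on an interval I, let a ∈ I, and let (Δ_n) be a sequence decreasing to 0 with lim_{n→∞} log Δ_{n+1} / log Δ_n = 1 and a + Δ_n ∈ I. Then limsup_{Δ→0⁺} log|h(a+Δ) - h(a)| / log Δ = limsup_{n→∞} log|h(a+Δ_n) - h(a)| / log Δ_n, and the same holds with liminf in place of limsup. -/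
open Filter Real Set

private lemma between_div (c A B t : ℝ) (h1 : A ≤ t) (h2 : t ≤ B) (hB : B < 0) :
    min (c / A) (c / B) ≤ c / t ∧ c / t ≤ max (c / A) (c / B) := by
  have ht : t < 0 := lt_of_le_of_lt h2 hB
  have hA : A < 0 := lt_of_le_of_lt h1 ht
  have hAt : 0 < A * t := mul_pos_of_neg_of_neg hA ht
  have htB : 0 < t * B := mul_pos_of_neg_of_neg ht hB
  have e1 : c / A - c / t = c * (t - A) / (A * t) := by
    rw [div_sub_div _ _ hA.ne ht.ne]
    congr 1
    ring
  have e2 : c / t - c / B = c * (B - t) / (t * B) := by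
    rw [div_sub_div _ _ ht.ne hB.ne]
    congr 1
    ring
  rcases le_total 0 c with hc | hc
  · have p1 : 0 ≤ c / A - c / t := by
      rw [e1]; exact div_nonneg (mul_nonneg hc (by linarith)) hAt.le
    have p2 : 0 ≤ c / t - c / B := by
      rw [e2]; exact div_nonneg (mul_nonneg hc (by linarith)) htB.le
    exact ⟨le_trans (min_le_right _ _) (by linarith), le_trans (by linarith) (le_max_left _ _)⟩
  · have q1 : 0 ≤ (-c) * (t - A) / (A * t) :=
      div_nonneg (mul_nonneg (by linarith) (by linarith)) hAt.le
    have q2 : 0 ≤ (-c) * (B - t) / (t * B) :=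
      div_nonneg (mul_nonneg (by linarith) (by linarith)) htB.le
    have r1 : (-c) * (t - A) / (A * t) = -(c * (t - A) / (A * t)) := by ring
    have r2 : (-c) * (B - t) / (t * B) = -(c * (B - t) / (t * B)) := by ring
    have p1 : c / A - c / t ≤ 0 := by rw [e1]; linarith [r1 ▸ q1]
    have p2 : c / t - c / B ≤ 0 := by rw [e2]; linarith [r2 ▸ q2]
    exact ⟨le_trans (min_le_left _ _) (by linarith), le_trans (by linarith) (le_max_right _ _)⟩

private lemma helper_hi (M u r s : ℝ) (h1 : 1 ≤ r) (hrs : r ≤ s) (hu : u ≤ M) :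
    max u (u * r) ≤ max M (M * s) := by
  apply max_le (le_max_of_le_left hu)
  rcases le_total 0 u with h | h
  · exact le_max_of_le_right (by nlinarith)
  · exact le_max_of_le_left (by nlinarith)

private lemma helper_lo (m u r s : ℝ) (h1 : 1 ≤ r) (hrs : r ≤ s) (hmu : m ≤ u) :
    min (m / s) (m * s) ≤ min (u / r) u := by
  have hr : (0:ℝ) < r := by linarith
  have hs : (0:ℝ) < s := by linarith
  have hmm : min (m / s) (m * s) ≤ m := by
    rcases le_total 0 m with h | h
    · exact le_trans (min_le_left _ _) (div_le_self h (by linarith))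
    · exact le_trans (min_le_right _ _) (by nlinarith)
  apply le_min _ (hmm.trans hmu)
  rcases le_total 0 u with h | h
  · refine le_trans (min_le_left _ _) ?_
    rw [div_le_div_iff₀ hs hr]
    nlinarith
  · refine hmm.trans (hmu.trans ?_)
    rw [le_div_iff₀ hr]
    nlinarith

private lemma core (g : ℝ → ℝ) (Δ : ℕ → ℝ) (hpos : ∀ n, 0 < Δ n) (hanti : StrictAnti Δ)
    (hlim : Tendsto Δ atTop (nhds 0))
    (hratio : Tendsto (fun n => Real.log (Δ (n + 1)) / Real.log (Δ n)) atTop (nhds 1))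
    (hg0 : ∀ d, 0 < d → d ≤ Δ 0 → 0 ≤ g d)
    (hgmono : ∀ d e, 0 < d → d ≤ e → e ≤ Δ 0 → g d ≤ g e) :
    Filter.limsup (fun d => Real.log (g d) / Real.log d) (nhdsWithin 0 (Set.Ioi 0))
      = Filter.limsup (fun n => Real.log (g (Δ n)) / Real.log (Δ n)) Filter.atTop ∧
    Filter.liminf (fun d => Real.log (g d) / Real.log d) (nhdsWithin 0 (Set.Ioi 0))
      = Filter.liminf (fun n => Real.log (g (Δ n)) / Real.log (Δ n)) Filter.atTop := by
  set F : Filter ℝ := nhdsWithin 0 (Set.Ioi 0) with hF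
  set φ : ℝ → ℝ := fun d => Real.log (g d) / Real.log d with hφ
  set u : ℕ → ℝ := fun n => Real.log (g (Δ n)) / Real.log (Δ n) with hu
  have hmapF : Tendsto Δ atTop F :=
    tendsto_nhdsWithin_iff.2 ⟨hlim, Eventually.of_forall fun n => hpos n⟩
  have E1 : ∀ {p : ℝ → Prop}, (∀ᶠ d in F, p d) → ∀ᶠ n in atTop, p (Δ n) :=
    fun hp => hmapF.eventually hp
  have hΔ0 : ∀ n, Δ n ≤ Δ 0 := fun n => hanti.antitone (Nat.zero_le n)
  by_cases hz : ∃ n0, g (Δ n0) = 0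
  · -- degenerate case: g vanishes near 0
    obtain ⟨n0, hn0⟩ := hz
    have hgz : ∀ d, 0 < d → d ≤ Δ n0 → g d = 0 := by
      intro d hd hdn
      have h1 : g d ≤ g (Δ n0) := hgmono d (Δ n0) hd hdn (hΔ0 n0)
      have h2 : 0 ≤ g d := hg0 d hd (hdn.trans (hΔ0 n0))
      rw [hn0] at h1; linarith
    have hF0 : ∀ᶠ d in F, φ d = 0 := by
      filter_upwards [Ioc_mem_nhdsGT_of_mem (⟨le_rfl, hpos n0⟩ : (0:ℝ) ∈ Set.Ico 0 (Δ n0))]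
        with d hd
      simp [hφ, hgz d hd.1 hd.2, Real.log_zero]
    have hS0 : ∀ᶠ n in atTop, u n = 0 := by
      filter_upwards [eventually_ge_atTop n0] with n hn
      simp [hu, hgz (Δ n) (hpos n) (hanti.antitone hn), Real.log_zero]
    constructor
    · rw [limsup_congr hF0, limsup_congr hS0, limsup_const, limsup_const]
    · rw [liminf_congr hF0, liminf_congr hS0, liminf_const, liminf_const]
  · push_neg at hz
    have hgpos : ∀ n, 0 < g (Δ n) :=
      fun n => ((hg0 _ (hpos n) (hΔ0 n)).lt_of_ne (Ne.symm (hz n)))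
    have hd_exists : ∀ d : ℝ, 0 < d → ∃ n, Δ n < d :=
      fun d hd => (hlim.eventually (gt_mem_nhds hd)).exists
    have hgpos' : ∀ d, 0 < d → d ≤ Δ 0 → 0 < g d := by
      intro d hd hd0
      obtain ⟨n, hn⟩ := hd_exists d hd
      exact lt_of_lt_of_le (hgpos n) (hgmono (Δ n) d (hpos n) hn.le hd0)
    set M : ℝ := g (Δ 0) with hM
    have hMpos : 0 < M := hgpos 0
    -- lower bound of φ near zero
    have LBF : ∀ ε : ℝ, 0 < ε → ∀ᶠ d in F, -ε ≤ φ d := by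
      intro ε hε
      have t1 : Tendsto (fun d : ℝ => -Real.log d) F atTop :=
        tendsto_neg_atBot_atTop.comp Real.tendsto_log_nhdsGT_zero
      have t2 : Tendsto (fun d : ℝ => Real.log M / (-Real.log d)) F (nhds 0) :=
        t1.const_div_atTop (Real.log M)
      have T : Tendsto (fun d : ℝ => Real.log M / Real.log d) F (nhds 0) := by
        have t3 := t2.neg
        rw [neg_zero] at t3
        exact t3.congr fun d => by rw [div_neg, neg_neg]
      have ev1 : ∀ᶠ d in F, -ε < Real.log M / Real.log d :=
        T.eventually (eventually_gt_nhds (by linarith))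
      have hmin : (0:ℝ) ∈ Set.Ico (0:ℝ) (min (Δ 0) 1) :=
        ⟨le_rfl, lt_min (hpos 0) one_pos⟩
      filter_upwards [ev1, Ioo_mem_nhdsGT_of_mem hmin] with d h1 h2
      have hd0 : 0 < d := h2.1
      have hd1 : d < 1 := lt_of_lt_of_le h2.2 (min_le_right _ _)
      have hdΔ : d ≤ Δ 0 := le_trans h2.2.le (min_le_left _ _)
      have hlogd : Real.log d < 0 := Real.log_neg hd0 hd1
      have hgd : 0 < g d := hgpos' d hd0 hdΔ
      have hlog : Real.log (g d) ≤ Real.log M :=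
        Real.log_le_log hgd (hgmono d (Δ 0) hd0 hdΔ le_rfl)
      have : Real.log M / Real.log d ≤ φ d :=
        div_le_div_of_nonpos_of_le hlogd.le hlog
      linarith
    set r : ℕ → ℝ := fun n => Real.log (Δ (n + 1)) / Real.log (Δ n) with hr

    -- the sandwich
    have sand : ∀ N : ℕ, (∀ n, N ≤ n → Δ n < 1) → ∀ d, 0 < d → d < Δ N →
        ∃ n, N ≤ n ∧ min (u n / r n) (u n) ≤ φ d ∧ φ d ≤ max (u (n + 1)) (u (n + 1) * r n) := by
      intro N hN d hd0 hdN
      have hex : ∃ m, Δ m < d := hd_exists d hd0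
      set m : ℕ := Nat.find hex with hmdef
      have hm : Δ m < d := Nat.find_spec hex
      have hmN : N < m := by
        by_contra hc
        push_neg at hc
        have : Δ N ≤ Δ m := hanti.antitone hc
        linarith
      have hm1 : m - 1 + 1 = m := by omega
      refine ⟨m - 1, by omega, ?_⟩
      have hdn : d ≤ Δ (m - 1) := by
        have := Nat.find_min hex (show m - 1 < m by omega)
        push_neg at this
        exact this
      have hΔn1 : Δ (m - 1 + 1) ≤ d := by rw [hm1]; exact hm.le
      have h1 : Δ (m - 1) < 1 := hN _ (by omega)
      have hlogn : Real.log (Δ (m - 1)) < 0 := Real.log_neg (hpos _) h1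
      have h1' : Δ (m - 1 + 1) < 1 := lt_trans (hanti (Nat.lt_succ_self _)) h1
      have hlogn1 : Real.log (Δ (m - 1 + 1)) < 0 := Real.log_neg (hpos _) h1'
      have hld1 : Real.log (Δ (m - 1 + 1)) ≤ Real.log d := Real.log_le_log (hpos _) hΔn1
      have hld2 : Real.log d ≤ Real.log (Δ (m - 1)) := Real.log_le_log hd0 hdn
      have hdΔ0 : d ≤ Δ 0 := hdn.trans (hΔ0 _)
      have hgd : 0 < g d := hgpos' d hd0 hdΔ0
      have hlogd : Real.log d < 0 := lt_of_le_of_lt hld2 hlogn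
      -- raw bounds
      have hub : φ d ≤ Real.log (g (Δ (m - 1 + 1))) / Real.log d := by
        have hle : Real.log (g (Δ (m - 1 + 1))) ≤ Real.log (g d) :=
          Real.log_le_log (hgpos _) (hgmono _ _ (hpos _) hΔn1 hdΔ0)
        exact div_le_div_of_nonpos_of_le hlogd.le hle
      have hlb : Real.log (g (Δ (m - 1))) / Real.log d ≤ φ d := by
        have hle : Real.log (g d) ≤ Real.log (g (Δ (m - 1))) :=
          Real.log_le_log hgd (hgmono d _ hd0 hdn (hΔ0 _))
        exact div_le_div_of_nonpos_of_le hlogd.le hle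
      have hbet1 := between_div (Real.log (g (Δ (m - 1 + 1)))) _ _ _ hld1 hld2 hlogn
      have hbet2 := between_div (Real.log (g (Δ (m - 1)))) _ _ _ hld1 hld2 hlogn
      have hne1 : Real.log (Δ (m - 1 + 1)) ≠ 0 := hlogn1.ne
      have hne : Real.log (Δ (m - 1)) ≠ 0 := hlogn.ne
      have id2 : Real.log (g (Δ (m - 1 + 1))) / Real.log (Δ (m - 1))
          = u (m - 1 + 1) * r (m - 1) := by
        simp only [hu, hr]
        field_simp
      have id3 : Real.log (g (Δ (m - 1))) / Real.log (Δ (m - 1 + 1)) = u (m - 1) / r (m - 1) := by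
        simp only [hu, hr]
        rw [div_div_div_cancel_right₀]
        exact hne
      constructor
      · refine le_trans ?_ hlb
        refine le_trans ?_ hbet2.1
        rw [id3]
      · refine le_trans hub ?_
        refine le_trans hbet1.2 ?_
        rw [id2]
    have hΔlt1 : ∀ᶠ n in atTop, Δ n < 1 := hlim.eventually (gt_mem_nhds one_pos)
    have hr1 : ∀ᶠ n in atTop, 1 ≤ r n := by
      obtain ⟨N1, hN1⟩ := eventually_atTop.1 hΔlt1
      filter_upwards [eventually_ge_atTop N1] with n hn
      have a1 : Real.log (Δ n) < 0 := Real.log_neg (hpos n) (hN1 n hn)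
      have a2 : Real.log (Δ (n + 1)) ≤ Real.log (Δ n) :=
        Real.log_le_log (hpos _) (hanti (Nat.lt_succ_self n)).le
      rw [hr, le_div_iff_of_neg a1]
      linarith
    have up_wrap : ∀ ε : ℝ, 0 < ε → ∀ b : ℝ, (∀ᶠ n in atTop, u n ≤ b) →
        ∀ᶠ d in F, φ d ≤ max b (b * (1 + ε)) := by
      intro ε hε b hb
      have hrε : ∀ᶠ n in atTop, r n ≤ 1 + ε :=
        (hratio.eventually (eventually_lt_nhds (by linarith : (1:ℝ) < 1 + ε))).mono
          fun n hn => hn.le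
      obtain ⟨N, hN⟩ := eventually_atTop.1 (hΔlt1.and (hr1.and (hrε.and hb)))
      filter_upwards [Ioo_mem_nhdsGT_of_mem (⟨le_rfl, hpos N⟩ : (0:ℝ) ∈ Set.Ico 0 (Δ N))]
        with d hd
      obtain ⟨n, hNn, _, hup⟩ := sand N (fun n hn => (hN n hn).1) d hd.1 hd.2
      exact hup.trans (helper_hi b (u (n + 1)) (r n) (1 + ε) (hN n hNn).2.1 (hN n hNn).2.2.1
        (hN (n + 1) (by omega)).2.2.2)
    have lo_wrap : ∀ ε : ℝ, 0 < ε → ∀ b : ℝ, (∀ᶠ n in atTop, b ≤ u n) →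
        ∀ᶠ d in F, min (b / (1 + ε)) (b * (1 + ε)) ≤ φ d := by
      intro ε hε b hb
      have hrε : ∀ᶠ n in atTop, r n ≤ 1 + ε :=
        (hratio.eventually (eventually_lt_nhds (by linarith : (1:ℝ) < 1 + ε))).mono
          fun n hn => hn.le
      obtain ⟨N, hN⟩ := eventually_atTop.1 (hΔlt1.and (hr1.and (hrε.and hb)))
      filter_upwards [Ioo_mem_nhdsGT_of_mem (⟨le_rfl, hpos N⟩ : (0:ℝ) ∈ Set.Ico 0 (Δ N))]
        with d hd
      obtain ⟨n, hNn, hlo, _⟩ := sand N (fun n hn => (hN n hn).1) d hd.1 hd.2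
      exact le_trans (helper_lo b (u n) (r n) (1 + ε) (hN n hNn).2.1 (hN n hNn).2.2.1
        (hN n hNn).2.2.2) hlo
    constructor
    · -- limsup
      rw [limsup_eq, limsup_eq]
      set Tf : Set ℝ := {a | ∀ᶠ d in F, φ d ≤ a} with hTf
      set Ts : Set ℝ := {a | ∀ᶠ n in atTop, u n ≤ a} with hTs
      have hsub : Tf ⊆ Ts := fun a ha => E1 ha
      by_cases hTsne : Ts.Nonempty
      · obtain ⟨b, hb⟩ := hTsne
        have hTfne : Tf.Nonempty := ⟨max b (b * (1 + 1)), up_wrap 1 one_pos b hb⟩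
        have hbbTs : BddBelow Ts := by
          refine ⟨-1, fun a ha => ?_⟩
          obtain ⟨n, h1, h2⟩ := ((E1 (LBF 1 one_pos)).and ha).exists
          linarith
        have hbbTf : BddBelow Tf := by
          refine ⟨-1, fun a ha => ?_⟩
          obtain ⟨d, h1, h2⟩ := ((LBF 1 one_pos).and ha).exists
          linarith
        have hupper : sInf Ts ≤ sInf Tf := csInf_le_csInf hbbTs hTfne hsub
        have hS0 : 0 ≤ sInf Ts := by
          by_contra hc
          push_neg at hc
          have hε : (0:ℝ) < -(sInf Ts) / 2 := by linarith
          have hlow : ∀ a ∈ Ts, -(-(sInf Ts) / 2) ≤ a := by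
            intro a ha
            obtain ⟨n, h1, h2⟩ := ((E1 (LBF _ hε)).and ha).exists
            linarith
          have := le_csInf ⟨b, hb⟩ hlow
          linarith
        have hdown : sInf Tf ≤ sInf Ts := by
          apply le_of_forall_gt_imp_ge_of_dense
          intro c hc
          obtain ⟨b', hb', hb'c⟩ := exists_lt_of_csInf_lt ⟨b, hb⟩ hc
          have hb'0 : 0 ≤ b' := hS0.trans (csInf_le hbbTs hb')
          have hd1 : (0:ℝ) < b' + 1 := by linarith
          set ε : ℝ := (c - b') / (b' + 1) with hεdef
          have hε : 0 < ε := div_pos (by linarith) hd1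
          have hεe : ε * (b' + 1) = c - b' := div_mul_cancel₀ _ hd1.ne'
          have hmax : max b' (b' * (1 + ε)) ≤ c := by
            apply max_le (by linarith)
            nlinarith
          exact le_trans (csInf_le hbbTf (up_wrap ε hε b' hb')) hmax
        exact le_antisymm hdown hupper
      · have hTse : Ts = ∅ := not_nonempty_iff_eq_empty.1 hTsne
        have hTfe : Tf = ∅ := by
          rw [← Set.subset_empty_iff, ← hTse]
          exact hsub
        rw [hTse, hTfe]
    · -- liminf
      rw [liminf_eq, liminf_eq]
      set Uf : Set ℝ := {a | ∀ᶠ d in F, a ≤ φ d} with hUf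
      set Us : Set ℝ := {a | ∀ᶠ n in atTop, a ≤ u n} with hUs
      have hsub : Uf ⊆ Us := fun a ha => E1 ha
      have hUfne : Uf.Nonempty := ⟨-1, LBF 1 one_pos⟩
      have hUsne : Us.Nonempty := ⟨-1, E1 (LBF 1 one_pos)⟩
      by_cases hbu : BddAbove Us
      · have hbuf : BddAbove Uf := hbu.mono hsub
        have h1 : sSup Uf ≤ sSup Us := csSup_le_csSup hbu hUfne hsub
        have hL0 : 0 ≤ sSup Us := by
          by_contra hc
          push_neg at hc
          have hε : (0:ℝ) < -(sSup Us) / 2 := by linarith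
          have := le_csSup hbu (E1 (LBF _ hε))
          linarith
        have h2 : sSup Us ≤ sSup Uf := by
          apply le_of_forall_lt_imp_le_of_dense
          intro c hc
          rcases le_or_gt 0 c with hc0 | hc0
          · obtain ⟨b, hbUs, hcb⟩ := exists_lt_of_lt_csSup hUsne hc
            have hd1 : (0:ℝ) < 2 * c + 1 := by linarith
            set ε : ℝ := (b - c) / (2 * c + 1) with hεdef
            have hε : 0 < ε := div_pos (by linarith) hd1
            have hεe : ε * (2 * c + 1) = b - c := div_mul_cancel₀ _ hd1.ne'
            have hm1 : c ≤ b / (1 + ε) := by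
              rw [le_div_iff₀ (by linarith)]
              nlinarith
            have hm2 : c ≤ b * (1 + ε) := by nlinarith
            exact le_trans (le_min hm1 hm2) (le_csSup hbuf (lo_wrap ε hε b hbUs))
          · have hhalf : c / 2 < sSup Us := by linarith
            obtain ⟨b, hbUs, hcb⟩ := exists_lt_of_lt_csSup hUsne hhalf
            have hm1 : c ≤ b / (1 + 1) := by linarith
            have hm2 : c ≤ b * (1 + 1) := by linarith
            exact le_trans (le_min hm1 hm2) (le_csSup hbuf (lo_wrap 1 one_pos b hbUs))
        exact le_antisymm h1 h2
      · have hbuf : ¬ BddAbove Uf := by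
          rw [not_bddAbove_iff] at hbu ⊢
          intro x
          obtain ⟨b, hbUs, hxb⟩ := hbu (max x 0 * 2 + 1)
          have hx1 : x ≤ max x 0 := le_max_left x 0
          have hx2 : (0:ℝ) ≤ max x 0 := le_max_right x 0
          refine ⟨min (b / (1 + 1)) (b * (1 + 1)), lo_wrap 1 one_pos b hbUs, ?_⟩
          apply lt_min (by linarith) (by linarith)
        rw [Real.sSup_of_not_bddAbove hbuf, Real.sSup_of_not_bddAbove hbu]

theorem stmt17 (I : Set ℝ) (hI : I.OrdConnected) (h : ℝ → ℝ)
    (hmono : MonotoneOn h I ∨ AntitoneOn h I) (a : ℝ) (ha : a ∈ I)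
    (Δ : ℕ → ℝ) (hpos : ∀ n, 0 < Δ n) (hanti : StrictAnti Δ)
    (hlim : Filter.Tendsto Δ Filter.atTop (nhds 0))
    (hratio : Filter.Tendsto (fun n => Real.log (Δ (n + 1)) / Real.log (Δ n))
      Filter.atTop (nhds 1))
    (hmem : ∀ n, a + Δ n ∈ I) :
    Filter.limsup (fun d => Real.log |h (a + d) - h a| / Real.log d)
        (nhdsWithin 0 (Set.Ioi 0))
      = Filter.limsup (fun n => Real.log |h (a + Δ n) - h a| / Real.log (Δ n))
        Filter.atTop ∧
    Filter.liminf (fun d => Real.log |h (a + d) - h a| / Real.log d)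
        (nhdsWithin 0 (Set.Ioi 0))
      = Filter.liminf (fun n => Real.log |h (a + Δ n) - h a| / Real.log (Δ n))
        Filter.atTop := by
  have hIoc : ∀ d : ℝ, 0 < d → d ≤ Δ 0 → a + d ∈ I := fun d h1 h2 =>
    hI.out ha (hmem 0) ⟨by linarith, by linarith⟩
  have hg0 : ∀ d : ℝ, 0 < d → d ≤ Δ 0 → 0 ≤ |h (a + d) - h a| := fun d _ _ => abs_nonneg _
  have hgmono : ∀ d e : ℝ, 0 < d → d ≤ e → e ≤ Δ 0 →
      |h (a + d) - h a| ≤ |h (a + e) - h a| := by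
    intro d e hd hde he0
    have he : 0 < e := lt_of_lt_of_le hd hde
    have hd' : a + d ∈ I := hIoc d hd (hde.trans he0)
    have he' : a + e ∈ I := hIoc e he he0
    rcases hmono with hm | hm
    · have h1 : h a ≤ h (a + d) := hm ha hd' (by linarith)
      have h2 : h (a + d) ≤ h (a + e) := hm hd' he' (by linarith)
      rw [abs_of_nonneg (by linarith), abs_of_nonneg (by linarith)]
      linarith
    · have h1 : h (a + d) ≤ h a := hm ha hd' (by linarith)
      have h2 : h (a + e) ≤ h (a + d) := hm hd' he' (by linarith)
      rw [abs_of_nonpos (by linarith), abs_of_nonpos (by linarith)]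
      linarith
  exact core (fun d => |h (a + d) - h a|) Δ hpos hanti hlim hratio hg0 hgmono
end
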